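/- arXiv:0708.0996 — 3 statements merged into one kernel-verified Lean document; each statement's English description precedes it below -/
import Mathlib

section
/- Let n be a real number and define a : ℕ → ℝ by a₀ = 1 and a_{i+1} = (i(i+1) + n)/((i+1)(i+2)) · a_i. Then the power series W₁(x) = Σ_{i≥0} a_i x^{i+1} has radius of convergence at least 1, and for all x ∈ (-1,1), x(1-x)·W₁''(x) = n·W₁(x). -/
open scoped Nat

-- summability of quadratic polynomial times geometric
lemma poly_geom_summable {r : ℝ} (hr : |r| < 1) (c0 c1 c2 : ℝ) :
    Summable fun i : ℕ => (c2*(i:ℝ)^2 + c1*(i:ℝ) + c0) * r^i := by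
  have hr' : ‖r‖ < 1 := by simpa using hr
  have h2 : Summable fun i : ℕ => (i:ℝ)^2 * r^i :=
    summable_pow_mul_geometric_of_norm_lt_one 2 hr'
  have h1 : Summable fun i : ℕ => (i:ℝ)^1 * r^i :=
    summable_pow_mul_geometric_of_norm_lt_one 1 hr'
  have h0 : Summable fun i : ℕ => r^i := summable_geometric_of_norm_lt_one hr'
  have := (h2.mul_left c2).add ((h1.mul_left c1).add (h0.mul_left c0))
  refine this.congr fun i => ?_
  ring

lemma abs_a_le (n : ℝ) (a : ℕ → ℝ) (ha0 : a 0 = 1)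
    (ha : ∀ i : ℕ, a (i+1) = ((i * (i+1) + n) / ((i+1) * (i+2))) * a i) :
    ∀ i, |a i| ≤ Real.exp |n| := by
  have key : ∀ i : ℕ, |a i| ≤ Real.exp (|n| * (i/(i+1))) := by
    intro i
    induction i with
    | zero => simp [ha0, Real.exp_nonneg, Real.one_le_exp_iff]
    | succ i ih =>
      have hd : (0:ℝ) < ((i:ℝ)+1)*((i:ℝ)+2) := by positivity
      rw [ha i, abs_mul]
      have h1 : |((i:ℝ) * (i+1) + n) / ((i+1) * (i+2))| ≤ 1 + |n|/(((i:ℝ)+1)*((i:ℝ)+2)) := by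
        rw [abs_div, abs_of_pos hd]
        rw [div_le_iff₀ hd]
        have : |(i:ℝ) * (i+1) + n| ≤ (i:ℝ)*(i+1) + |n| := by
          calc |(i:ℝ) * (i+1) + n| ≤ |(i:ℝ)*(i+1)| + |n| := abs_add_le _ _
          _ = (i:ℝ)*(i+1) + |n| := by rw [abs_of_nonneg (by positivity)]
        refine this.trans ?_
        rw [add_mul, one_mul, div_mul_cancel₀ _ (ne_of_gt hd)]
        nlinarith [abs_nonneg n, Nat.cast_nonneg (α := ℝ) i]
      have h2 : (1:ℝ) + |n|/(((i:ℝ)+1)*((i:ℝ)+2)) ≤ Real.exp (|n|/(((i:ℝ)+1)*((i:ℝ)+2))) := by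
        have := Real.add_one_le_exp (|n|/(((i:ℝ)+1)*((i:ℝ)+2)))
        linarith
      calc |((i:ℝ) * (i+1) + n) / ((i+1) * (i+2))| * |a i|
          ≤ Real.exp (|n|/(((i:ℝ)+1)*((i:ℝ)+2))) * Real.exp (|n| * (i/(i+1))) := by
            apply mul_le_mul (h1.trans h2) ih (abs_nonneg _) (Real.exp_nonneg _)
        _ = Real.exp (|n| * ((↑(i+1):ℝ)/((↑(i+1):ℝ)+1))) := by
            rw [← Real.exp_add]
            congr 1
            push_cast
            field_simp
            ring
  intro i
  refine (key i).trans ?_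
  apply Real.exp_le_exp.mpr
  have h1 : (i:ℝ)/((i:ℝ)+1) ≤ 1 := by
    rw [div_le_one (by positivity)]; linarith
  nlinarith [abs_nonneg n]

theorem frobenius_W1 (n : ℝ) (a : ℕ → ℝ) (ha0 : a 0 = 1)
    (ha : ∀ i : ℕ, a (i+1) = ((i * (i+1) + n) / ((i+1) * (i+2))) * a i) :
    (∀ x : ℝ, |x| < 1 → Summable fun i : ℕ => a i * x ^ (i+1)) ∧
    (∀ x ∈ Set.Ioo (-1:ℝ) 1,
      x * (1-x) * iteratedDeriv 2 (fun x : ℝ => ∑' i : ℕ, a i * x ^ (i+1)) x =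
        n * ∑' i : ℕ, a i * x ^ (i+1)) := by
  set B := Real.exp |n| with hB
  have hBpos : 0 < B := Real.exp_pos _
  have habd := abs_a_le n a ha0 ha
  -- Part 1
  have part1 : ∀ x : ℝ, |x| < 1 → Summable fun i : ℕ => a i * x ^ (i+1) := by
    intro x hx
    have hs : Summable fun i : ℕ => (B * |x|) * |x|^i :=
      ((summable_geometric_of_norm_lt_one (K := ℝ) (x := |x|) (by simpa using hx)).mul_left _)
    refine Summable.of_norm_bounded hs fun i => ?_
    rw [Real.norm_eq_abs, abs_mul, abs_pow, pow_succ]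
    calc |a i| * (|x|^i * |x|) ≤ B * (|x|^i * |x|) := by
          apply mul_le_mul_of_nonneg_right (habd i) (by positivity)
      _ = (B * |x|) * |x|^i := by ring
  refine ⟨part1, ?_⟩
  -- Part 2
  rintro x ⟨hx1, hx2⟩
  have hxabs : |x| < 1 := abs_lt.mpr ⟨hx1, hx2⟩
  set r : ℝ := (|x| + 1) / 2 with hrdef
  have hr0 : 0 < r := by positivity
  have hxr : |x| < r := by simp only [hrdef]; linarith
  have hr1 : r < 1 := by simp only [hrdef]; linarith
  have hrabs : |r| < 1 := by rw [abs_of_pos hr0]; exact hr1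
  have ht : IsOpen (Set.Ioo (-r) r) := isOpen_Ioo
  have htc : IsPreconnected (Set.Ioo (-r) r) := (convex_Ioo (-r) r).isPreconnected
  have hxt : x ∈ Set.Ioo (-r) r :=
    ⟨by linarith [neg_lt_of_abs_lt hxr], lt_of_abs_lt hxr⟩
  have h0t : (0:ℝ) ∈ Set.Ioo (-r) r := ⟨by linarith, hr0⟩
  have hmem : ∀ y ∈ Set.Ioo (-r) r, |y| ≤ r := fun y hy => by
    rw [abs_le]; exact ⟨hy.1.le, hy.2.le⟩
  -- first derivative
  have sum1 : Summable fun i : ℕ => B * (((i:ℝ)+1) * ((i:ℝ)+2)) * r^i := by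
    refine (poly_geom_summable hrabs (2*B) (3*B) B).congr fun i => ?_
    ring
  have hd1 : ∀ y ∈ Set.Ioo (-r) r,
      HasDerivAt (fun z : ℝ => ∑' i : ℕ, a i * z ^ (i+1))
        (∑' i : ℕ, a i * (((i:ℝ)+1) * y ^ i)) y := by
    intro y hy
    refine hasDerivAt_tsum_of_isPreconnected (g := fun i z => a i * z ^ (i+1))
      (g' := fun i z => a i * (((i:ℝ)+1) * z ^ i)) sum1 ht htc
      (fun i z hz => ?_) (fun i z hz => ?_) h0t ?_ hy
    · have := (hasDerivAt_pow (i+1) z).const_mul (a i)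
      simpa using this
    · rw [Real.norm_eq_abs, abs_mul, abs_mul, abs_pow]
      have h1 : |((i:ℝ) + 1)| = (i:ℝ)+1 := abs_of_pos (by positivity)
      rw [h1]
      calc |a i| * (((i:ℝ)+1) * |z|^i) ≤ B * (((i:ℝ)+1) * r^i) := by
            apply mul_le_mul (habd i) ?_ (by positivity) hBpos.le
            exact mul_le_mul_of_nonneg_left (pow_le_pow_left₀ (abs_nonneg z) (hmem z hz) i) (by positivity)
        _ = (B * ((i:ℝ)+1)) * r^i := by ring
        _ ≤ (B * (((i:ℝ)+1) * ((i:ℝ)+2))) * r^i := by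
            refine mul_le_mul_of_nonneg_right ?_ (pow_nonneg hr0.le i)
            refine mul_le_mul_of_nonneg_left ?_ hBpos.le
            nlinarith [Nat.cast_nonneg (α := ℝ) i]
        _ = B * (((i:ℝ)+1) * ((i:ℝ)+2)) * r^i := by ring
    · exact summable_zero.congr fun i => by simp
  -- second derivative
  have sum2 : Summable fun i : ℕ => (B/r) * ((i:ℝ)^2 + (i:ℝ)) * r^i := by
    refine (poly_geom_summable hrabs 0 (B/r) (B/r)).congr fun i => ?_
    ring
  have hd2 : ∀ y ∈ Set.Ioo (-r) r,
      HasDerivAt (fun z : ℝ => ∑' i : ℕ, a i * (((i:ℝ)+1) * z ^ i))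
        (∑' i : ℕ, a i * (((i:ℝ)+1) * ((i:ℝ) * y ^ (i-1)))) y := by
    intro y hy
    refine hasDerivAt_tsum_of_isPreconnected (g := fun i z => a i * (((i:ℝ)+1) * z ^ i))
      (g' := fun i z => a i * (((i:ℝ)+1) * ((i:ℝ) * z ^ (i-1)))) sum2 ht htc
      (fun i z hz => ?_) (fun i z hz => ?_) h0t ?_ hy
    · have h := (hasDerivAt_pow i z).const_mul (a i * ((i:ℝ)+1))
      have e1 : (fun w : ℝ => (a i * ((i:ℝ)+1)) * w ^ i)
          = fun w : ℝ => a i * (((i:ℝ)+1) * w ^ i) := by funext w; ring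
      rw [e1] at h
      convert h using 1
      all_goals first | rfl | ring
    · rw [Real.norm_eq_abs, abs_mul, abs_mul, abs_mul, abs_pow]
      rw [abs_of_pos (show (0:ℝ) < (i:ℝ)+1 by positivity), abs_of_nonneg (Nat.cast_nonneg (α := ℝ) i)]
      have hzr : |z|^(i-1) ≤ r^(i-1) := pow_le_pow_left₀ (abs_nonneg z) (hmem z hz) _
      calc |a i| * (((i:ℝ)+1) * ((i:ℝ) * |z|^(i-1)))
          ≤ B * (((i:ℝ)+1) * ((i:ℝ) * r^(i-1))) := by
            apply mul_le_mul (habd i) ?_ (by positivity) hBpos.le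
            apply mul_le_mul_of_nonneg_left ?_ (by positivity)
            exact mul_le_mul_of_nonneg_left hzr (Nat.cast_nonneg (α := ℝ) i)
        _ ≤ (B/r) * ((i:ℝ)^2 + (i:ℝ)) * r^i := by
            cases i with
            | zero => simp
            | succ j =>
              have hstep : r^(j+1-1) = r^(j+1) / r := by
                rw [Nat.add_sub_cancel, pow_succ, mul_div_assoc, div_self (ne_of_gt hr0), mul_one]
              rw [hstep]
              push_cast
              apply le_of_eq
              field_simp
    · refine summable_of_ne_finset_zero (s := {0}) fun i hi => ?_
      have : i ≠ 0 := by simpa using hi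
      simp [zero_pow this]
  -- identify the second iterated derivative
  set f : ℝ → ℝ := fun z => ∑' i : ℕ, a i * z ^ (i+1) with hf
  set g : ℝ → ℝ := fun z => ∑' i : ℕ, a i * (((i:ℝ)+1) * z ^ i) with hg
  have hderiv_eq : Set.EqOn (deriv f) g (Set.Ioo (-r) r) := fun y hy =>
    (hd1 y hy).deriv
  have hev : deriv f =ᶠ[nhds x] g :=
    Filter.eventuallyEq_of_mem (ht.mem_nhds hxt) hderiv_eq
  have hiter : iteratedDeriv 2 f x
      = ∑' i : ℕ, a i * (((i:ℝ)+1) * ((i:ℝ) * x ^ (i-1))) := by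
    rw [show (2:ℕ) = 1+1 from rfl, iteratedDeriv_succ, iteratedDeriv_one]
    rw [hev.deriv_eq]
    exact (hd2 x hxt).deriv
  rw [hiter]
  -- algebra with tsums
  set u : ℕ → ℝ := fun i => a i * (((i:ℝ)+1) * ((i:ℝ) * x ^ i)) with hu
  set v : ℕ → ℝ := fun i => a i * (((i:ℝ)+1) * ((i:ℝ) * x ^ (i+1))) with hv
  have hxr' : |(|x|)| < 1 := by rwa [abs_abs]
  have sU : Summable u := by
    refine Summable.of_norm_bounded (poly_geom_summable hxr' 0 B B) fun i => ?_
    rw [hu, Real.norm_eq_abs, abs_mul, abs_mul, abs_mul, abs_pow,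
      abs_of_pos (show (0:ℝ) < (i:ℝ)+1 by positivity), abs_of_nonneg (Nat.cast_nonneg (α := ℝ) i)]
    calc |a i| * (((i:ℝ)+1) * ((i:ℝ) * |x|^i)) ≤ B * (((i:ℝ)+1) * ((i:ℝ) * |x|^i)) := by
          apply mul_le_mul_of_nonneg_right (habd i) (by positivity)
      _ = (B*(i:ℝ)^2 + B*(i:ℝ) + 0) * |x|^i := by ring
  have sV : Summable v := by
    refine (sU.mul_right x).congr fun i => ?_
    simp only [hu, hv, pow_succ]; ring
  have sU' : Summable fun i => u (i+1) := (summable_nat_add_iff 1).2 sU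
  have sA : Summable fun i : ℕ => a i * x ^ (i+1) := part1 x hxabs
  -- main computation
  have step1 : x * (1-x) * (∑' i : ℕ, a i * (((i:ℝ)+1) * ((i:ℝ) * x ^ (i-1))))
      = ∑' i : ℕ, (u i - v i) := by
    rw [← tsum_mul_left]
    congr 1
    funext i
    cases i with
    | zero => simp [hu, hv]
    | succ j =>
      simp only [hu, hv, Nat.add_sub_cancel]
      push_cast
      ring
  have step2 : ∑' i : ℕ, (u i - v i) = (∑' i, u (i+1)) - ∑' i, v i := by
    rw [Summable.tsum_sub sU sV]
    congr 1
    rw [Summable.tsum_eq_zero_add sU]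
    simp [hu]
  have step3 : (∑' i, u (i+1)) - (∑' i, v i) = ∑' i : ℕ, n * (a i * x ^ (i+1)) := by
    rw [← Summable.tsum_sub sU' sV]
    congr 1
    funext i
    have hne : ((i:ℝ)+1) * ((i:ℝ)+2) ≠ 0 := by positivity
    simp only [hu, hv]
    rw [ha i]
    push_cast
    field_simp
    ring
  rw [step1, step2, step3, tsum_mul_left]
end

section
/- Let n ≠ 0 and let a : ℕ → ℝ satisfy a₀ = 1, a_{i+1} = (i(i+1)+n)/((i+1)(i+2))·a_i. Define c₀ = -1, c_i = (2i-1)a_{i-1} - (2i+1)a_i for i ≥ 1, and b : ℕ → ℝ by b₀ = 1/n, b₁ = -1, b_{i+1} = (c_i + ((i-1)i + n)·b_i)/(i(i+1)) for i ≥ 1. Set W₁(x) = Σ a_i x^{i+1} and W₂(x) = Σ b_i x^i. Then for x ∈ (0,1), W_C(x) = n·(W₂(x) + W₁(x)·ln x) satisfies x(1-x)·W_C''(x) = n·W_C(x). -/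
open Real Set Function

namespace FrobAux

/-- polynomially bounded coefficients -/
def PB (u : ℕ → ℝ) : Prop := ∃ C : ℝ, ∃ k : ℕ, ∀ i : ℕ, |u i| ≤ C * ((i : ℝ) + 1) ^ k

noncomputable def Dc (u : ℕ → ℝ) : ℕ → ℝ := fun i => ((i : ℝ) + 1) * u (i + 1)

noncomputable def F (u : ℕ → ℝ) (y : ℝ) : ℝ := ∑' i : ℕ, u i * y ^ i

lemma aux_summable (C : ℝ) (k : ℕ) {r : ℝ} (h0 : 0 ≤ r) (h1 : r < 1) :
    Summable fun i : ℕ => C * ((i : ℝ) + 1) ^ k * r ^ i := by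
  have : (fun i : ℕ => C * ((i : ℝ) + 1) ^ k * r ^ i)
      = fun i : ℕ => C * (((i : ℝ) + 1) ^ k * r ^ i) := by funext i; ring
  rw [this]
  apply Summable.mul_left
  rcases eq_or_lt_of_le h0 with h | h
  · apply summable_of_ne_finset_zero (s := ({0} : Finset ℕ))
    intro i hi
    simp only [Finset.mem_singleton] at hi
    rw [← h, zero_pow hi, mul_zero]
  · have h1' : ‖r‖ < 1 := by rwa [Real.norm_eq_abs, abs_of_nonneg h0]
    have hs := summable_pow_mul_geometric_of_norm_lt_one (R := ℝ) k h1'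
    have hs2 : Summable fun i : ℕ => ((i : ℝ) + 1) ^ k * r ^ (i + 1) := by
      have := hs.comp_injective Nat.succ_injective
      refine this.congr fun i => ?_
      simp only [Function.comp, Nat.succ_eq_add_one]
      push_cast
      ring
    refine (hs2.mul_left r⁻¹).congr fun i => ?_
    field_simp
    ring

lemma PB.abs_summable {u : ℕ → ℝ} (hu : PB u) {r : ℝ} (h0 : 0 ≤ r) (h1 : r < 1) :
    Summable fun i : ℕ => |u i| * r ^ i := by
  obtain ⟨C, k, hC⟩ := hu
  refine Summable.of_nonneg_of_le (fun i => by positivity) (fun i => ?_)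
    (aux_summable C k h0 h1)
  exact mul_le_mul_of_nonneg_right (hC i) (pow_nonneg h0 i)

lemma PB.summable {u : ℕ → ℝ} (hu : PB u) {x : ℝ} (h0 : 0 ≤ x) (h1 : x < 1) :
    Summable fun i : ℕ => u i * x ^ i := by
  rw [← summable_abs_iff]
  refine (hu.abs_summable h0 h1).congr fun i => ?_
  rw [abs_mul, abs_pow, abs_of_nonneg h0]

lemma PB.dc {u : ℕ → ℝ} (hu : PB u) : PB (Dc u) := by
  obtain ⟨C, k, hC⟩ := hu
  have hC0 : 0 ≤ C := by have := hC 0; have h := abs_nonneg (u 0); simp at this; linarith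
  refine ⟨C * 2 ^ k, k + 1, fun i => ?_⟩
  have h1 : |FrobAux.Dc u i| = ((i : ℝ) + 1) * |u (i + 1)| := by
    rw [FrobAux.Dc, abs_mul, abs_of_nonneg (by positivity)]
  rw [h1]
  have h2 : |u (i + 1)| ≤ C * ((i : ℝ) + 2) ^ k := by
    have := hC (i + 1); push_cast at this; convert this using 3 <;> ring
  calc ((i : ℝ) + 1) * |u (i + 1)| ≤ ((i : ℝ) + 1) * (C * ((i : ℝ) + 2) ^ k) := by
        exact mul_le_mul_of_nonneg_left h2 (by positivity)
    _ ≤ ((i : ℝ) + 1) * (C * (2 * ((i : ℝ) + 1)) ^ k) := by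
        have : ((i : ℝ) + 2) ^ k ≤ (2 * ((i : ℝ) + 1)) ^ k := by
          apply pow_le_pow_left₀ (by positivity); linarith
        exact mul_le_mul_of_nonneg_left (mul_le_mul_of_nonneg_left this hC0) (by positivity)
    _ = C * 2 ^ k * ((i : ℝ) + 1) ^ (k + 1) := by rw [mul_pow]; ring

lemma hasSum_shift {u v : ℕ → ℝ} {S x : ℝ} (h : HasSum (fun i : ℕ => u i * x ^ (i + 1)) S)
    (hv0 : v 0 = 0) (hv : ∀ i : ℕ, v (i + 1) = u i) : HasSum (fun i : ℕ => v i * x ^ i) S := by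
  refine (Function.Injective.hasSum_iff Nat.succ_injective ?_).1 ?_
  · intro m hm
    match m with
    | 0 => simp [hv0]
    | k + 1 => exact absurd ⟨k, rfl⟩ hm
  · have e : ((fun i : ℕ => v i * x ^ i) ∘ Nat.succ) = fun i : ℕ => u i * x ^ (i + 1) :=
      funext fun i => by simp [Function.comp, hv]
    rw [e]; exact h

lemma PB.hasDerivAt {u : ℕ → ℝ} (hu : PB u) {x : ℝ} (hx0 : 0 < x) (hx1 : x < 1) :
    HasDerivAt (F u) (F (Dc u) x) x := by
  obtain ⟨C, k, hC⟩ := hu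
  have hC0 : 0 ≤ C := by have := hC 0; have h := abs_nonneg (u 0); simp at this; linarith
  set r : ℝ := (x + 1) / 2 with hr
  have hr0 : 0 < r := by rw [hr]; linarith
  have hr1 : r < 1 := by rw [hr]; linarith
  have hxr : x < r := by rw [hr]; linarith
  set M : ℕ → ℝ := fun n => |u n| * n * r ^ (n - 1) with hM
  have hMs : Summable M := by
    rw [← summable_nat_add_iff 1]
    refine Summable.of_nonneg_of_le (fun n => by positivity) (fun n => ?_)
      (aux_summable (C * 2 ^ k) (k + 1) hr0.le hr1)
    show |u (n + 1)| * (↑(n + 1) : ℝ) * r ^ (n + 1 - 1) ≤ _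
    have h2 : |u (n + 1)| ≤ C * ((n : ℝ) + 2) ^ k := by
      have := hC (n + 1); push_cast at this; convert this using 3; ring
    have h3 : ((n : ℝ) + 2) ^ k ≤ (2 * ((n : ℝ) + 1)) ^ k :=
      pow_le_pow_left₀ (by positivity) (by linarith) k
    have h4 : |u (n + 1)| * (↑(n + 1) : ℝ) ≤ C * 2 ^ k * ((n : ℝ) + 1) ^ (k + 1) := by
      push_cast
      calc |u (n + 1)| * ((n : ℝ) + 1) ≤ (C * ((n : ℝ) + 2) ^ k) * ((n : ℝ) + 1) :=
            mul_le_mul_of_nonneg_right h2 (by positivity)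
        _ ≤ (C * (2 * ((n : ℝ) + 1)) ^ k) * ((n : ℝ) + 1) :=
            mul_le_mul_of_nonneg_right (mul_le_mul_of_nonneg_left h3 hC0) (by positivity)
        _ = C * 2 ^ k * ((n : ℝ) + 1) ^ (k + 1) := by rw [mul_pow]; ring
    have h5 : (n + 1 - 1 : ℕ) = n := rfl
    rw [h5]
    exact mul_le_mul_of_nonneg_right h4 (pow_nonneg hr0.le n)
  have hmem : x ∈ Ioo (0 : ℝ) r := ⟨hx0, hxr⟩
  have hbound : ∀ (n : ℕ) (y : ℝ), y ∈ Ioo (0 : ℝ) r →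
      ‖u n * ((n : ℝ) * y ^ (n - 1))‖ ≤ M n := by
    intro n y hy
    rw [Real.norm_eq_abs, abs_mul, abs_mul, abs_pow, hM]
    have h1 : |y| ^ (n - 1) ≤ r ^ (n - 1) :=
      pow_le_pow_left₀ (abs_nonneg _) (by rw [abs_of_pos hy.1]; exact hy.2.le) _
    rw [abs_of_nonneg (by positivity : (0:ℝ) ≤ (n:ℝ))]
    calc |u n| * ((n:ℝ) * |y| ^ (n-1)) ≤ |u n| * ((n:ℝ) * r ^ (n-1)) := by
          apply mul_le_mul_of_nonneg_left _ (abs_nonneg _)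
          exact mul_le_mul_of_nonneg_left h1 (by positivity)
      _ = |u n| * (n:ℝ) * r ^ (n-1) := by ring
  have hsum0 : Summable fun n : ℕ => u n * x ^ n := PB.summable ⟨C, k, hC⟩ hx0.le hx1
  have key := hasDerivAt_tsum_of_isPreconnected hMs (isOpen_Ioo (a := (0:ℝ)) (b := r))
    (isPreconnected_Ioo) (g := fun n y => u n * y ^ n)
    (g' := fun n y => u n * ((n : ℝ) * y ^ (n - 1)))
    (fun n y _ => (hasDerivAt_pow n y).const_mul (u n))
    hbound hmem hsum0 hmem
  have hsum' : Summable fun n : ℕ => u n * ((n : ℝ) * x ^ (n - 1)) := by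
    rw [← summable_abs_iff]
    refine Summable.of_nonneg_of_le (fun n => abs_nonneg _) (fun n => ?_) hMs
    have := hbound n x hmem
    rwa [Real.norm_eq_abs] at this
  have hshift : HasSum (fun i : ℕ => Dc u i * x ^ i)
      (∑' n : ℕ, u n * ((n : ℝ) * x ^ (n - 1))) := by
    have h1 := (Function.Injective.hasSum_iff
      (f := fun n : ℕ => u n * ((n : ℝ) * x ^ (n - 1)))
      Nat.succ_injective (fun m hm => by
        match m with
        | 0 => simp
        | k + 1 => exact absurd ⟨k, rfl⟩ hm)).2 hsum'.hasSum
    have e : ((fun n : ℕ => u n * ((n : ℝ) * x ^ (n - 1))) ∘ Nat.succ)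
        = fun i : ℕ => Dc u i * x ^ i := by
      funext i
      simp only [Function.comp, Nat.succ_eq_add_one, Nat.add_sub_cancel, Dc]
      push_cast
      ring
    rw [e] at h1
    exact h1
  have : F (Dc u) x = ∑' n : ℕ, u n * ((n : ℝ) * x ^ (n - 1)) := hshift.tsum_eq
  rw [show F u = fun y => ∑' i : ℕ, u i * y ^ i from rfl, this]
  exact key

lemma a_bound (n : ℝ) (a : ℕ → ℝ)
    (ha : ∀ i : ℕ, a (i+1) = ((i * (i+1) + n) / ((i+1) * (i+2))) * a i) :
    ∃ C : ℝ, ∀ i : ℕ, |a i| ≤ C := by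
  set N := ⌈|n|⌉₊ with hN
  set C := ∑ j ∈ Finset.range (N+1), |a j| with hC
  have hCj : ∀ j ≤ N, |a j| ≤ C := fun j hj =>
    Finset.single_le_sum (f := fun j => |a j|) (fun _ _ => abs_nonneg _)
      (Finset.mem_range.2 (Nat.lt_succ_of_le hj))
  have hdec : ∀ i : ℕ, N ≤ i → |a (i+1)| ≤ |a i| := by
    intro i hi
    rw [ha i, abs_mul]
    have hden : (0:ℝ) < ((i:ℝ)+1)*((i:ℝ)+2) := by positivity
    have hle : |n| ≤ 2*(i:ℝ)+2 := by
      have h1 : |n| ≤ (N:ℝ) := Nat.le_ceil |n|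
      have h2 : (N:ℝ) ≤ (i:ℝ) := Nat.cast_le.2 hi
      linarith
    have hrat : |((i:ℝ)*((i:ℝ)+1) + n) / (((i:ℝ)+1)*((i:ℝ)+2))| ≤ 1 := by
      rw [abs_div, abs_of_pos hden, div_le_one hden]
      calc |(i:ℝ)*((i:ℝ)+1) + n| ≤ |(i:ℝ)*((i:ℝ)+1)| + |n| := abs_add_le _ _
        _ = (i:ℝ)*((i:ℝ)+1) + |n| := by rw [abs_of_nonneg (by positivity)]
        _ ≤ ((i:ℝ)+1)*((i:ℝ)+2) := by nlinarith
    calc |((i:ℝ)*((i:ℝ)+1) + n) / (((i:ℝ)+1)*((i:ℝ)+2))| * |a i| ≤ 1 * |a i| :=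
          mul_le_mul_of_nonneg_right hrat (abs_nonneg _)
      _ = |a i| := one_mul _
  have hbd : ∀ m : ℕ, |a (N + m)| ≤ C := by
    intro m
    induction m with
    | zero => exact hCj N le_rfl
    | succ m ih => exact le_trans (hdec (N+m) (Nat.le_add_right _ _)) ih
  refine ⟨C, fun i => ?_⟩
  rcases le_or_gt i N with h | h
  · exact hCj i h
  · obtain ⟨m, rfl⟩ := Nat.exists_eq_add_of_le h.le
    exact hbd m

lemma b_bound (n : ℝ) (a b c : ℕ → ℝ) (Ca : ℝ) (hCa : ∀ i : ℕ, |a i| ≤ Ca)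
    (hc : ∀ i : ℕ, 1 ≤ i → c i = (2*i - 1) * a (i-1) - (2*i + 1) * a i)
    (hb : ∀ i : ℕ, 1 ≤ i → b (i+1) = (c i + ((i-1) * i + n) * b i) / (i * (i+1))) :
    ∃ C : ℝ, ∀ i : ℕ, |b i| ≤ C * ((i:ℝ) + 1) := by
  have hCa0 : 0 ≤ Ca := le_trans (abs_nonneg _) (hCa 0)
  set N := ⌈|n|⌉₊ + 1 with hN
  set Cb := 4*Ca + 1 + ∑ j ∈ Finset.range (N+1), |b j| with hCb
  have hsum0 : (0:ℝ) ≤ ∑ j ∈ Finset.range (N+1), |b j| :=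
    Finset.sum_nonneg fun _ _ => abs_nonneg _
  have hCb4 : 4*Ca + 1 ≤ Cb := by rw [hCb]; linarith
  have hCb0 : (0:ℝ) ≤ Cb := by linarith
  have hCbj : ∀ j ≤ N, |b j| ≤ Cb := by
    intro j hj
    have := Finset.single_le_sum (f := fun j => |b j|) (fun _ _ => abs_nonneg _)
      (Finset.mem_range.2 (Nat.lt_succ_of_le hj))
    rw [hCb]; linarith
  have hstep : ∀ i : ℕ, N ≤ i → |b i| ≤ Cb*((i:ℝ)+1) → |b (i+1)| ≤ Cb*((i:ℝ)+2) := by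
    intro i hi hbi
    have hi1 : 1 ≤ i := le_trans (by omega) hi
    have hi1' : (1:ℝ) ≤ (i:ℝ) := by exact_mod_cast hi1
    have hden : (0:ℝ) < (i:ℝ)*((i:ℝ)+1) := by nlinarith
    have hnle : |n| ≤ (i:ℝ) := by
      have h1 : |n| ≤ (↑⌈|n|⌉₊:ℝ) := Nat.le_ceil |n|
      have h2 : ((⌈|n|⌉₊:ℕ):ℝ) ≤ (i:ℝ) := by
        have : ⌈|n|⌉₊ ≤ i := by omega
        exact_mod_cast this
      linarith
    rw [hb i hi1, hc i hi1]
    rw [abs_div, abs_of_pos hden, div_le_iff₀ hden]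
    have h1 : |(2*(i:ℝ)-1)*a (i-1)| ≤ (2*(i:ℝ)-1)*Ca := by
      rw [abs_mul, abs_of_nonneg (by linarith : (0:ℝ) ≤ 2*(i:ℝ)-1)]
      exact mul_le_mul_of_nonneg_left (hCa _) (by linarith)
    have h2 : |(2*(i:ℝ)+1)*a i| ≤ (2*(i:ℝ)+1)*Ca := by
      rw [abs_mul, abs_of_nonneg (by linarith : (0:ℝ) ≤ 2*(i:ℝ)+1)]
      exact mul_le_mul_of_nonneg_left (hCa _) (by linarith)
    have h3 : |(((i:ℝ)-1)*(i:ℝ)+n)*b i| ≤ ((i:ℝ)*((i:ℝ)+1))*(Cb*((i:ℝ)+1)) := by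
      rw [abs_mul]
      apply mul_le_mul _ hbi (abs_nonneg _) (by positivity)
      calc |((i:ℝ)-1)*(i:ℝ)+n| ≤ |((i:ℝ)-1)*(i:ℝ)| + |n| := abs_add_le _ _
        _ = ((i:ℝ)-1)*(i:ℝ) + |n| := by rw [abs_of_nonneg (by nlinarith)]
        _ ≤ (i:ℝ)*((i:ℝ)+1) := by nlinarith
    calc |(2*(i:ℝ)-1)*a (i-1) - (2*(i:ℝ)+1)*a i + (((i:ℝ)-1)*(i:ℝ)+n)*b i|
        ≤ |(2*(i:ℝ)-1)*a (i-1) - (2*(i:ℝ)+1)*a i| + |(((i:ℝ)-1)*(i:ℝ)+n)*b i| := abs_add_le _ _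
      _ ≤ |(2*(i:ℝ)-1)*a (i-1)| + |(2*(i:ℝ)+1)*a i| + |(((i:ℝ)-1)*(i:ℝ)+n)*b i| := by
          have := abs_sub (2*(i:ℝ)-1) 1
          gcongr
          exact abs_sub _ _
      _ ≤ (2*(i:ℝ)-1)*Ca + (2*(i:ℝ)+1)*Ca + ((i:ℝ)*((i:ℝ)+1))*(Cb*((i:ℝ)+1)) := by
          gcongr
      _ ≤ Cb*((i:ℝ)+2) * ((i:ℝ)*((i:ℝ)+1)) := by
          have h4 := mul_le_mul_of_nonneg_left hCb4 hden.le
          nlinarith [mul_nonneg hCa0 (le_trans zero_le_one hi1'), mul_nonneg hCa0 (mul_nonneg (by linarith : (0:ℝ) ≤ (i:ℝ)) (by linarith : (0:ℝ) ≤ (i:ℝ)-1))]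
  have hbd : ∀ m : ℕ, |b (N + m)| ≤ Cb * ((N:ℝ) + (m:ℝ) + 1) := by
    intro m
    induction m with
    | zero =>
        simp only [Nat.add_zero, Nat.cast_zero, add_zero]
        calc |b N| ≤ Cb := hCbj N le_rfl
          _ ≤ Cb * ((N:ℝ)+1) := by nlinarith [Nat.cast_nonneg (α := ℝ) N]
    | succ m ih =>
        have h := hstep (N+m) (Nat.le_add_right _ _) (by push_cast; push_cast at ih; linarith)
        have : N + (m+1) = (N+m) + 1 := by omega
        rw [this]
        push_cast at h ⊢
        linarith
  refine ⟨Cb, fun i => ?_⟩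
  rcases le_or_gt i N with h | h
  · calc |b i| ≤ Cb := hCbj i h
      _ ≤ Cb * ((i:ℝ)+1) := by nlinarith [Nat.cast_nonneg (α := ℝ) i]
  · obtain ⟨m, rfl⟩ := Nat.exists_eq_add_of_le h.le
    have := hbd m
    push_cast at this ⊢
    linarith

end FrobAux

open FrobAux Real Set

theorem frobenius_WC (n : ℝ) (hn : n ≠ 0) (a b c : ℕ → ℝ)
    (ha0 : a 0 = 1)
    (ha : ∀ i : ℕ, a (i+1) = ((i * (i+1) + n) / ((i+1) * (i+2))) * a i)
    (hc0 : c 0 = -1)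
    (hc : ∀ i : ℕ, 1 ≤ i → c i = (2*i - 1) * a (i-1) - (2*i + 1) * a i)
    (hb0 : b 0 = 1/n) (hb1 : b 1 = -1)
    (hb : ∀ i : ℕ, 1 ≤ i → b (i+1) = (c i + ((i-1) * i + n) * b i) / (i * (i+1))) :
    ∀ x ∈ Set.Ioo (0:ℝ) 1,
      x * (1-x) * iteratedDeriv 2
        (fun x : ℝ => n * ((∑' i : ℕ, b i * x ^ i) +
          (∑' i : ℕ, a i * x ^ (i+1)) * Real.log x)) x =
      n * (n * ((∑' i : ℕ, b i * x ^ i) +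
          (∑' i : ℕ, a i * x ^ (i+1)) * Real.log x)) := by
  intro x hx
  obtain ⟨hx0, hx1⟩ := hx
  have hxne : x ≠ 0 := ne_of_gt hx0
  obtain ⟨Ca, hCa⟩ := a_bound n a ha
  have hApb : PB a := ⟨Ca, 0, fun i => by simpa using hCa i⟩
  obtain ⟨Cb, hCb⟩ := b_bound n a b c Ca hCa hc hb
  have hBpb : PB b := ⟨Cb, 1, fun i => by simpa using hCb i⟩
  -- rewrite the function in terms of F
  have hfun : (fun x : ℝ => n * ((∑' i : ℕ, b i * x ^ i) +
      (∑' i : ℕ, a i * x ^ (i+1)) * Real.log x))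
      = fun y : ℝ => n * (F b y + (y * F a y) * Real.log y) := by
    funext y
    have h1 : (∑' i : ℕ, a i * y ^ (i+1)) = y * F a y := by
      rw [show F a y = ∑' i : ℕ, a i * y ^ i from rfl, ← tsum_mul_left]
      exact tsum_congr fun i => by ring
    rw [h1]; rfl
  have hRa : (∑' i : ℕ, a i * x ^ (i+1)) = x * F a x := by
    rw [show F a x = ∑' i : ℕ, a i * x ^ i from rfl, ← tsum_mul_left]
    exact tsum_congr fun i => by ring
  have hRb : (∑' i : ℕ, b i * x ^ i) = F b x := rfl
  rw [hfun, hRa, hRb]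
  -- first derivative on Ioo 0 1
  have hψ : ∀ y ∈ Set.Ioo (0:ℝ) 1,
      HasDerivAt (fun y : ℝ => n * (F b y + (y * F a y) * Real.log y))
      (n * (F (Dc b) y + ((F a y + y * F (Dc a) y) * Real.log y + F a y))) y := by
    intro y hy
    have h1 := hBpb.hasDerivAt hy.1 hy.2
    have h2 := hApb.hasDerivAt hy.1 hy.2
    have h3 : HasDerivAt (fun z : ℝ => z * F a z) (F a y + y * F (Dc a) y) y := by
      have := (hasDerivAt_id y).fun_mul h2
      simpa using this
    have h4 := h3.fun_mul (Real.hasDerivAt_log (ne_of_gt hy.1))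
    have h5 := (h1.add h4).const_mul n
    refine h5.congr_deriv ?_
    rw [mul_comm y (F a y), mul_assoc, mul_inv_cancel₀ (ne_of_gt hy.1), mul_one]
  -- second derivative at x
  have hψ₁ : HasDerivAt
      (fun y : ℝ => n * (F (Dc b) y + ((F a y + y * F (Dc a) y) * Real.log y + F a y)))
      (n * (F (Dc (Dc b)) x + ((2 * F (Dc a) x + x * F (Dc (Dc a)) x) * Real.log x
        + (F a x + x * F (Dc a) x) * x⁻¹ + F (Dc a) x))) x := by
    have h1 := (hBpb.dc).hasDerivAt hx0 hx1
    have h2 := hApb.hasDerivAt hx0 hx1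
    have h2' := (hApb.dc).hasDerivAt hx0 hx1
    have h3 : HasDerivAt (fun z : ℝ => F a z + z * F (Dc a) z)
        (F (Dc a) x + (F (Dc a) x + x * F (Dc (Dc a)) x)) x :=
      h2.add (by simpa using (hasDerivAt_id x).fun_mul h2')
    have h4 := h3.fun_mul (Real.hasDerivAt_log hxne)
    have h5 := (h1.add (h4.add h2)).const_mul n
    refine h5.congr_deriv ?_
    ring
  have hev : deriv (fun y : ℝ => n * (F b y + (y * F a y) * Real.log y)) =ᶠ[nhds x]
      (fun y : ℝ => n * (F (Dc b) y + ((F a y + y * F (Dc a) y) * Real.log y + F a y))) := by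
    filter_upwards [Ioo_mem_nhds hx0 hx1] with y hy
    exact (hψ y hy).deriv
  have hit : iteratedDeriv 2 (fun y : ℝ => n * (F b y + (y * F a y) * Real.log y)) x
      = n * (F (Dc (Dc b)) x + ((2 * F (Dc a) x + x * F (Dc (Dc a)) x) * Real.log x
        + (F a x + x * F (Dc a) x) * x⁻¹ + F (Dc a) x)) := by
    rw [show (2:ℕ) = 1 + 1 from rfl, iteratedDeriv_succ, iteratedDeriv_one]
    rw [hev.deriv_eq]
    exact hψ₁.deriv
  rw [hit]
  -- HasSum facts
  have hsa : HasSum (fun i : ℕ => a i * x ^ i) (F a x) :=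
    (hApb.summable hx0.le hx1).hasSum
  have hsb : HasSum (fun i : ℕ => b i * x ^ i) (F b x) :=
    (hBpb.summable hx0.le hx1).hasSum
  have hsDa : HasSum (fun i : ℕ => Dc a i * x ^ i) (F (Dc a) x) :=
    ((hApb.dc).summable hx0.le hx1).hasSum
  have hsDDa : HasSum (fun i : ℕ => Dc (Dc a) i * x ^ i) (F (Dc (Dc a)) x) :=
    ((hApb.dc.dc).summable hx0.le hx1).hasSum
  have hsDb : HasSum (fun i : ℕ => Dc b i * x ^ i) (F (Dc b) x) :=
    ((hBpb.dc).summable hx0.le hx1).hasSum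
  have hsDDb : HasSum (fun i : ℕ => Dc (Dc b) i * x ^ i) (F (Dc (Dc b)) x) :=
    ((hBpb.dc.dc).summable hx0.le hx1).hasSum
  -- Identity I1 : (1-x) * (2 F(Da) + x F(DDa)) = n * F a
  have t1 : HasSum (fun i : ℕ => 2 * (Dc a i * x ^ i)) (2 * F (Dc a) x) := hsDa.mul_left 2
  have t2 : HasSum (fun i : ℕ => Dc (Dc a) i * x ^ (i+1)) (x * F (Dc (Dc a)) x) := by
    have h := hsDDa.mul_left x
    have e : (fun i : ℕ => x * (Dc (Dc a) i * x ^ i))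
        = fun i : ℕ => Dc (Dc a) i * x ^ (i+1) := funext fun i => by ring
    rwa [e] at h
  have t2' : HasSum (fun i : ℕ => ((i:ℝ) * Dc a i) * x ^ i) (x * F (Dc (Dc a)) x) :=
    hasSum_shift t2 (by simp) (fun i => by simp only [Dc]; push_cast; ring)
  have t12 : HasSum (fun i : ℕ => (((i:ℝ)+2) * Dc a i) * x ^ i)
      (2 * F (Dc a) x + x * F (Dc (Dc a)) x) := by
    have h := t1.add t2'
    have e : (fun i : ℕ => 2 * (Dc a i * x ^ i) + ((i:ℝ) * Dc a i) * x ^ i)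
        = fun i : ℕ => (((i:ℝ)+2) * Dc a i) * x ^ i := funext fun i => by ring
    rwa [e] at h
  have t3 : HasSum (fun i : ℕ => (((i:ℝ)+2) * Dc a i) * x ^ (i+1))
      (x * (2 * F (Dc a) x + x * F (Dc (Dc a)) x)) := by
    have h := t12.mul_left x
    have e : (fun i : ℕ => x * ((((i:ℝ)+2) * Dc a i) * x ^ i))
        = fun i : ℕ => (((i:ℝ)+2) * Dc a i) * x ^ (i+1) := funext fun i => by ring
    rwa [e] at h
  have t3' : HasSum (fun i : ℕ => ((((i:ℝ)+1) * (i:ℝ)) * a i) * x ^ i)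
      (x * (2 * F (Dc a) x + x * F (Dc (Dc a)) x)) :=
    hasSum_shift t3 (by simp) (fun i => by simp only [Dc]; push_cast; ring)
  have t4 := t12.sub t3'
  have t5 : HasSum (fun i : ℕ => n * (a i * x ^ i))
      (2 * F (Dc a) x + x * F (Dc (Dc a)) x
        - x * (2 * F (Dc a) x + x * F (Dc (Dc a)) x)) := by
    have e : (fun i : ℕ => (((i:ℝ)+2) * Dc a i) * x ^ i - ((((i:ℝ)+1) * (i:ℝ)) * a i) * x ^ i)
        = fun i : ℕ => n * (a i * x ^ i) := by
      funext i
      have hkey : ((i:ℝ)+2) * Dc a i = ((i:ℝ) * ((i:ℝ)+1) + n) * a i := by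
        simp only [Dc]
        rw [ha i]
        have hne : ((i:ℝ)+1) * ((i:ℝ)+2) ≠ 0 := by positivity
        push_cast
        field_simp
      rw [hkey]; ring
    rwa [e] at t4
  have hI1 : (1-x) * (2 * F (Dc a) x + x * F (Dc (Dc a)) x) = n * F a x := by
    have h := t5.unique (hsa.mul_left n)
    linear_combination h
  -- Identity I2
  have u1 : HasSum (fun i : ℕ => Dc (Dc b) i * x ^ (i+1)) (x * F (Dc (Dc b)) x) := by
    have h := hsDDb.mul_left x
    have e : (fun i : ℕ => x * (Dc (Dc b) i * x ^ i))
        = fun i : ℕ => Dc (Dc b) i * x ^ (i+1) := funext fun i => by ring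
    rwa [e] at h
  have u1' : HasSum (fun i : ℕ => ((i:ℝ) * Dc b i) * x ^ i) (x * F (Dc (Dc b)) x) :=
    hasSum_shift u1 (by simp) (fun i => by simp only [Dc]; push_cast; ring)
  have u2 : HasSum (fun i : ℕ => Dc a i * x ^ (i+1)) (x * F (Dc a) x) := by
    have h := hsDa.mul_left x
    have e : (fun i : ℕ => x * (Dc a i * x ^ i))
        = fun i : ℕ => Dc a i * x ^ (i+1) := funext fun i => by ring
    rwa [e] at h
  have u2' : HasSum (fun i : ℕ => ((i:ℝ) * a i) * x ^ i) (x * F (Dc a) x) :=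
    hasSum_shift u2 (by simp) (fun i => by simp only [Dc]; push_cast; ring)
  have uU : HasSum (fun i : ℕ => ((i:ℝ) * Dc b i + 2 * ((i:ℝ) * a i) + a i) * x ^ i)
      (x * F (Dc (Dc b)) x + 2 * (x * F (Dc a) x) + F a x) := by
    have h := (u1'.add (u2'.mul_left 2)).add hsa
    have e : (fun i : ℕ => ((i:ℝ) * Dc b i) * x ^ i + 2 * (((i:ℝ) * a i) * x ^ i) + a i * x ^ i)
        = fun i : ℕ => ((i:ℝ) * Dc b i + 2 * ((i:ℝ) * a i) + a i) * x ^ i :=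
      funext fun i => by ring
    rwa [e] at h
  have uxU : HasSum (fun i : ℕ => ((i:ℝ) * Dc b i + 2 * ((i:ℝ) * a i) + a i) * x ^ (i+1))
      (x * (x * F (Dc (Dc b)) x + 2 * (x * F (Dc a) x) + F a x)) := by
    have h := uU.mul_left x
    have e : (fun i : ℕ => x * (((i:ℝ) * Dc b i + 2 * ((i:ℝ) * a i) + a i) * x ^ i))
        = fun i : ℕ => ((i:ℝ) * Dc b i + 2 * ((i:ℝ) * a i) + a i) * x ^ (i+1) :=
      funext fun i => by ring
    rwa [e] at h
  have uxU' : HasSum (fun i : ℕ => (if i = 0 then 0 else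
      (((i:ℝ)-1) * (i:ℝ) * b i + (2*(i:ℝ)-1) * a (i-1))) * x ^ i)
      (x * (x * F (Dc (Dc b)) x + 2 * (x * F (Dc a) x) + F a x)) :=
    hasSum_shift uxU (by simp) (fun i => by
      simp only [Nat.succ_ne_zero, if_false, Dc, Nat.add_sub_cancel]
      push_cast
      ring)
  have u4 := uU.sub uxU'
  have u5 : HasSum (fun i : ℕ => n * (b i * x ^ i))
      ((x * F (Dc (Dc b)) x + 2 * (x * F (Dc a) x) + F a x)
        - x * (x * F (Dc (Dc b)) x + 2 * (x * F (Dc a) x) + F a x)) := by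
    have e : (fun i : ℕ => ((i:ℝ) * Dc b i + 2 * ((i:ℝ) * a i) + a i) * x ^ i
        - (if i = 0 then 0 else (((i:ℝ)-1) * (i:ℝ) * b i + (2*(i:ℝ)-1) * a (i-1))) * x ^ i)
        = fun i : ℕ => n * (b i * x ^ i) := by
      funext i
      match i with
      | 0 =>
        simp only [Nat.cast_zero, if_pos rfl, ha0, hb0, pow_zero]
        field_simp
        simp
      | j+1 =>
        have hj1 : 1 ≤ j + 1 := Nat.succ_le_succ (Nat.zero_le j)
        have hbj := hb (j+1) hj1
        have hcj := hc (j+1) hj1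
        have hne : ((j:ℝ)+1) * (((j:ℝ)+1)+1) ≠ 0 := by positivity
        simp only [if_neg (Nat.succ_ne_zero j), Dc, Nat.add_sub_cancel]
        rw [hbj, hcj]
        push_cast at hne ⊢
        field_simp
        ring
    rwa [e] at u4
  have hI2' : (x * F (Dc (Dc b)) x + 2 * (x * F (Dc a) x) + F a x)
      - x * (x * F (Dc (Dc b)) x + 2 * (x * F (Dc a) x) + F a x) = n * F b x :=
    u5.unique (hsb.mul_left n)
  have hfrac : (F a x + x * F (Dc a) x) * x⁻¹ * (x * (1-x))
      = (1-x) * (F a x + x * F (Dc a) x) := by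
    field_simp
  linear_combination (n * x * Real.log x) * hI1 + n * hI2' + n * hfrac
end

section
/- Suppose v : (0,1) → ℝ is twice differentiable, satisfies l'(1-l')·v''(l') = (3/16)·v(l'), that v(l') → 1 as l' → 0⁺, and that v'(l') - (3/16)·ln l' → -(9/8)·ln 2 as l' → 0⁺. If W_A and W_C are the two linearly independent Frobenius solutions (W_A(x) = Σ a_i x^{i+1} with a₀ = 1; W_C(x) = (3/16)·Σ b_i x^i + (3/16)·ln x · W_A(x) with b₀ = 16/3, b₁ = -1, and a_i, b_i given by the recurrences a_{i+1} = (i(i+1)+3/16)a_i/((i+1)(i+2)) and b_{i+1} = ((2i-1)a_{i-1}-(2i+1)a_i+((i-1)i+3/16)b_i)/(i(i+1)) for i ≥ 1), then v = A·W_A + C·W_C on (0,1) with C = 1 and A = -(9/8)·ln 2. -/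
open Filter
open Real

namespace VExp

noncomputable def S (c : ℕ → ℝ) (x : ℝ) : ℝ := ∑' n, c n * x ^ n
noncomputable def Dc (c : ℕ → ℝ) : ℕ → ℝ := fun n => (n+1) * c (n+1)
noncomputable def sh (c : ℕ → ℝ) : ℕ → ℝ := fun n => if n = 0 then 0 else c (n-1)

@[simp] lemma sh_zero (c : ℕ → ℝ) : sh c 0 = 0 := rfl
@[simp] lemma sh_succ (c : ℕ → ℝ) (n : ℕ) : sh c (n+1) = c n := rfl

def Poly (c : ℕ → ℝ) : Prop := ∃ K : ℝ, ∃ k : ℕ, ∀ n : ℕ, |c n| ≤ K * (n+1)^k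

lemma summable_geom_aux (k : ℕ) {r : ℝ} (h0 : 0 ≤ r) (h1 : r < 1) :
    Summable (fun n : ℕ => ((n:ℝ)+1)^k * r^n) := by
  rcases eq_or_lt_of_le h0 with h|h
  · apply summable_of_ne_finset_zero (s := {0})
    intro n hn
    simp only [Finset.mem_singleton] at hn
    rw [← h, zero_pow hn, mul_zero]
  · have hs : Summable (fun n : ℕ => (n:ℝ)^k * r^n) :=
      summable_pow_mul_geometric_of_norm_lt_one k (by rwa [Real.norm_eq_abs, abs_of_pos h])
    have h2 : Summable (fun n : ℕ => ((n:ℝ)+1)^k * r^(n+1)) := by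
      have := (summable_nat_add_iff 1).2 hs
      simpa using this
    have h3 := h2.mul_left r⁻¹
    refine h3.congr (fun n => ?_)
    rw [pow_succ]
    field_simp

lemma Poly.dc {c : ℕ → ℝ} (hc : Poly c) : Poly (Dc c) := by
  obtain ⟨K, k, hK⟩ := hc
  refine ⟨2^k * K, k+1, fun n => ?_⟩
  have h1 : |Dc c n| = ((n:ℝ)+1) * |c (n+1)| := by
    rw [Dc, abs_mul, abs_of_nonneg (by positivity)]
  rw [h1]
  have h2 : |c (n+1)| ≤ K * ((n:ℝ)+2)^k := by
    have := hK (n+1)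
    push_cast at this
    convert this using 3
    ring
  have hKnn : 0 ≤ K := le_trans (abs_nonneg _) (by simpa using hK 0)
  have h3 : ((n:ℝ)+2)^k ≤ (2*((n:ℝ)+1))^k := by
    apply pow_le_pow_left₀ (by positivity)
    linarith [Nat.cast_nonneg (α := ℝ) n]
  calc ((n:ℝ)+1) * |c (n+1)| ≤ ((n:ℝ)+1) * (K * (2*((n:ℝ)+1))^k) := by
        apply mul_le_mul_of_nonneg_left _ (by positivity)
        exact le_trans h2 (by nlinarith [pow_nonneg (by positivity : (0:ℝ) ≤ (n:ℝ)+2) k])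
    _ = 2^k * K * ((n:ℝ)+1)^(k+1) := by rw [mul_pow]; ring
  
lemma Poly.summable {c : ℕ → ℝ} (hc : Poly c) {x : ℝ} (hx : |x| < 1) :
    Summable (fun n => c n * x^n) := by
  obtain ⟨K, k, hK⟩ := hc
  apply Summable.of_norm_bounded (f := fun n : ℕ => c n * x^n)
    (g := fun n : ℕ => K * (((n:ℝ)+1)^k * |x|^n))
    ((summable_geom_aux k (abs_nonneg x) hx).mul_left K)
  · intro n
    rw [Real.norm_eq_abs, abs_mul, abs_pow]
    calc |c n| * |x|^n ≤ (K * ((n:ℝ)+1)^k) * |x|^n := by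
          apply mul_le_mul_of_nonneg_right (hK n) (by positivity)
      _ = K * (((n:ℝ)+1)^k * |x|^n) := by ring


lemma Poly.shp {c : ℕ → ℝ} (hc : Poly c) : Poly (sh c) := by
  obtain ⟨K, k, hK⟩ := hc
  have hKnn : 0 ≤ K := le_trans (abs_nonneg _) (by simpa using hK 0)
  refine ⟨K, k, fun n => ?_⟩
  cases n with
  | zero => simpa using by positivity
  | succ m =>
    rw [sh_succ]
    calc |c m| ≤ K * ((m:ℝ)+1)^k := hK m
      _ ≤ K * ((m:ℝ)+1+1)^k := by
          apply mul_le_mul_of_nonneg_left _ hKnn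
          apply pow_le_pow_left₀ (by positivity) (by linarith)
      _ = K * ((((m+1):ℕ):ℝ)+1)^k := by push_cast; ring_nf

lemma S_sh {c : ℕ → ℝ} {x : ℝ} (hc : Summable (fun n => c n * x^n)) :
    S (sh c) x = x * S c x := by
  rw [S, S, ← tsum_mul_left]
  have hs : Summable (fun n => x * (c n * x ^ n)) := hc.mul_left x
  rw [Summable.tsum_eq_zero_add]
  · simp only [sh_zero, zero_mul, zero_add, sh_succ]
    apply tsum_congr
    intro n
    ring
  · -- Summable fun n => sh c n * x ^ n
    apply (summable_nat_add_iff 1).1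
    refine (hs.congr (fun n => ?_))
    simp only [sh_succ]
    ring

lemma S_zero_coeff {x : ℝ} : S (fun _ => (0:ℝ)) x = 0 := by
  simp [S]


lemma summable_at_zero (c : ℕ → ℝ) : Summable (fun n => c n * (0:ℝ)^n) := by
  apply summable_of_ne_finset_zero (s := {0})
  intro n hn
  simp only [Finset.mem_singleton] at hn
  rw [zero_pow hn, mul_zero]

lemma hasDerivAt_S {c : ℕ → ℝ} (hc : Poly c) {x : ℝ} (hx : |x| < 1) :
    HasDerivAt (S c) (S (Dc c) x) x := by
  obtain ⟨K, k, hK⟩ := hc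
  have hKnn : 0 ≤ K := le_trans (abs_nonneg _) (by simpa using hK 0)
  set r : ℝ := (1 + |x|)/2 with hr
  have hr0 : 0 < r := by positivity
  have hxr : |x| < r := by rw [hr]; linarith
  have hr1 : r < 1 := by rw [hr]; linarith
  have hmem : x ∈ Set.Ioo (-r) r := by
    constructor
    · linarith [neg_abs_le x]
    · linarith [le_abs_self x]
  have h0mem : (0:ℝ) ∈ Set.Ioo (-r) r := by constructor <;> [linarith; linarith]
  have key : HasDerivAt (fun z => ∑' n, c n * z ^ n)
      (∑' n, c n * ((n:ℝ) * x ^ (n-1))) x := by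
    apply hasDerivAt_tsum_of_isPreconnected
      (g := fun (n : ℕ) (z : ℝ) => c n * z ^ n)
      (g' := fun (n : ℕ) (y : ℝ) => c n * ((n:ℝ) * y ^ (n-1)))
      (u := fun n : ℕ => (K/r) * (((n:ℝ)+1)^(k+1) * r^n))
      (((summable_geom_aux (k+1) hr0.le hr1).mul_left (K/r)))
      isOpen_Ioo (convex_Ioo _ _).isPreconnected
      (fun n y _ => (hasDerivAt_pow n y).const_mul (c n))
      (fun n y hy => ?_) h0mem (summable_at_zero c) hmem
    -- bound on derivative
    rw [Real.norm_eq_abs]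
    have hyr : |y| ≤ r := by
      rw [abs_le]; exact ⟨hy.1.le, hy.2.le⟩
    have hb1 : |c n * ((n:ℝ) * y^(n-1))| ≤ K * ((n:ℝ)+1)^k * ((n:ℝ) * r^(n-1)) := by
      rw [abs_mul, abs_mul]
      apply mul_le_mul (hK n)
      · rw [abs_of_nonneg (Nat.cast_nonneg n), abs_pow]
        apply mul_le_mul_of_nonneg_left _ (Nat.cast_nonneg n)
        exact pow_le_pow_left₀ (abs_nonneg y) hyr _
      · positivity
      · positivity
    apply le_trans hb1
    have hrpow : ((n:ℝ)) * r^(n-1) ≤ ((n:ℝ)+1) * (r^n / r) := by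
      cases n with
      | zero => simp; positivity
      | succ m =>
        have h1 : (m+1 : ℕ) - 1 = m := rfl
        have hrr : r^(m+1) / r = r^m := by
          rw [pow_succ]; field_simp
        rw [h1, hrr]
        apply mul_le_mul_of_nonneg_right _ (by positivity)
        push_cast; linarith
    calc K * ((n:ℝ)+1)^k * ((n:ℝ) * r^(n-1))
        ≤ K * ((n:ℝ)+1)^k * (((n:ℝ)+1) * (r^n / r)) := by
          apply mul_le_mul_of_nonneg_left hrpow (by positivity)
      _ = (K/r) * (((n:ℝ)+1)^(k+1) * r^n) := by rw [pow_succ]; field_simp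
  -- now rewrite the derivative value
  have hsum' : Summable (fun n => c n * ((n:ℝ) * x ^ (n-1))) := by
    apply Summable.of_norm_bounded (f := fun n : ℕ => c n * ((n:ℝ) * x ^ (n-1)))
      (g := fun n : ℕ => (K/r) * (((n:ℝ)+1)^(k+1) * r^n))
      ((summable_geom_aux (k+1) hr0.le hr1).mul_left (K/r))
    intro n
    rw [Real.norm_eq_abs]
    -- same bound as before with r replaced; redo quickly with y = x, r' = |x| ≤ r... 
    have hb1 : |c n * ((n:ℝ) * x^(n-1))| ≤ K * ((n:ℝ)+1)^k * ((n:ℝ) * |x|^(n-1)) := by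
      rw [abs_mul, abs_mul]
      apply mul_le_mul (hK n)
      · rw [abs_of_nonneg (Nat.cast_nonneg n), abs_pow]
      · positivity
      · positivity
    apply le_trans hb1
    have hrpow : ((n:ℝ)) * |x|^(n-1) ≤ ((n:ℝ)+1) * (r^n / r) := by
      cases n with
      | zero => simp; positivity
      | succ m =>
        have h1 : (m+1 : ℕ) - 1 = m := rfl
        have hrr : r^(m+1) / r = r^m := by
          rw [pow_succ]; field_simp
        rw [h1, hrr]
        have hxm : |x|^m ≤ r^m := pow_le_pow_left₀ (abs_nonneg x) hxr.le m
        have h2 : (0:ℝ) ≤ (m:ℝ)+1 := by positivity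
        push_cast
        nlinarith [pow_nonneg (abs_nonneg x) m, pow_nonneg hr0.le m]
    calc K * ((n:ℝ)+1)^k * ((n:ℝ) * |x|^(n-1))
        ≤ K * ((n:ℝ)+1)^k * (((n:ℝ)+1) * (r^n / r)) := by
          apply mul_le_mul_of_nonneg_left hrpow (by positivity)
      _ = (K/r) * (((n:ℝ)+1)^(k+1) * r^n) := by rw [pow_succ]; field_simp
  have hval : (∑' n, c n * ((n:ℝ) * x ^ (n-1))) = S (Dc c) x := by
    rw [S, Summable.tsum_eq_zero_add hsum']
    simp only [Nat.cast_zero, zero_mul, mul_zero, zero_add]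
    apply tsum_congr
    intro n
    have : (n+1 : ℕ) - 1 = n := rfl
    rw [this, Dc]
    push_cast
    ring
  rw [← hval]
  exact key


lemma Poly.tail {c : ℕ → ℝ} (hc : Poly c) :
    ∃ C : ℝ, 0 ≤ C ∧ ∀ x : ℝ, 0 < x → x ≤ 1/2 → |S c x - c 0| ≤ C * x := by
  obtain ⟨K, k, hK⟩ := hc
  have hKnn : 0 ≤ K := le_trans (abs_nonneg _) (by simpa using hK 0)
  have hsumC : Summable (fun n : ℕ => K * 2^k * (((n:ℝ)+1)^k * (1/2:ℝ)^n)) :=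
    (summable_geom_aux k (by norm_num) (by norm_num)).mul_left _
  refine ⟨∑' n : ℕ, K * 2^k * (((n:ℝ)+1)^k * (1/2:ℝ)^n),
    tsum_nonneg (fun n => by positivity), fun x hx0 hx2 => ?_⟩
  have hx1 : |x| < 1 := by rw [abs_of_pos hx0]; linarith
  have hs : Summable (fun n => c n * x^n) := Poly.summable ⟨K, k, hK⟩ hx1
  have heq : S c x - c 0 = ∑' n, c (n+1) * x^(n+1) := by
    rw [S, Summable.tsum_eq_zero_add hs]
    simp
  rw [heq]
  have hbd : ∀ n : ℕ, ‖c (n+1) * x^(n+1)‖ ≤ (K * 2^k * (((n:ℝ)+1)^k * (1/2:ℝ)^n)) * x := by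
    intro n
    rw [Real.norm_eq_abs, abs_mul, abs_pow, abs_of_pos hx0, pow_succ]
    have h1 : |c (n+1)| ≤ K * 2^k * ((n:ℝ)+1)^k := by
      calc |c (n+1)| ≤ K * (((n+1:ℕ):ℝ)+1)^k := hK (n+1)
        _ ≤ K * (2*((n:ℝ)+1))^k := by
            apply mul_le_mul_of_nonneg_left _ hKnn
            apply pow_le_pow_left₀ (by positivity)
            push_cast; linarith
        _ = K * 2^k * ((n:ℝ)+1)^k := by rw [mul_pow]; ring
    have h2 : x^n ≤ (1/2:ℝ)^n := pow_le_pow_left₀ hx0.le hx2 n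
    calc |c (n+1)| * (x^n * x) ≤ (K * 2^k * ((n:ℝ)+1)^k) * ((1/2:ℝ)^n * x) := by
          apply mul_le_mul h1 _ (by positivity) (by positivity)
          exact mul_le_mul_of_nonneg_right h2 hx0.le
      _ = (K * 2^k * (((n:ℝ)+1)^k * (1/2:ℝ)^n)) * x := by ring
  calc |∑' n, c (n+1) * x^(n+1)|
      ≤ ∑' n : ℕ, (K * 2^k * (((n:ℝ)+1)^k * (1/2:ℝ)^n)) * x := by
        apply tsum_of_norm_bounded ((hsumC.mul_right x).hasSum) hbd
    _ = (∑' n : ℕ, K * 2^k * (((n:ℝ)+1)^k * (1/2:ℝ)^n)) * x := by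
        rw [tsum_mul_right]

lemma Poly.tendsto_S {c : ℕ → ℝ} (hc : Poly c) :
    Tendsto (S c) (nhdsWithin 0 (Set.Ioi 0)) (nhds (c 0)) := by
  obtain ⟨C, hC0, hC⟩ := hc.tail
  have h1 : Tendsto (fun x : ℝ => S c x - c 0) (nhdsWithin 0 (Set.Ioi 0)) (nhds 0) := by
    apply squeeze_zero_norm' (a := fun x => C * x)
    · filter_upwards [Ioc_mem_nhdsGT_of_mem (by norm_num : (0:ℝ) ∈ Set.Ico 0 (1/2))]
        with x hx
      exact hC x hx.1 hx.2
    · have : Tendsto (fun x : ℝ => C * x) (nhdsWithin 0 (Set.Ioi 0)) (nhds (C * 0)) :=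
        (tendsto_const_nhds.mul (Filter.tendsto_id.mono_left nhdsWithin_le_nhds))
      simpa using this
  have := h1.add (tendsto_const_nhds (x := c 0))
  simpa using this

lemma tendsto_log_mul_small {g : ℝ → ℝ} {C : ℝ}
    (h : ∀ x : ℝ, 0 < x → x ≤ 1/2 → |g x| ≤ C * x) :
    Tendsto (fun x => Real.log x * g x) (nhdsWithin 0 (Set.Ioi 0)) (nhds 0) := by
  apply squeeze_zero_norm' (a := fun x => C * |Real.log x * x|)
  · filter_upwards [Ioc_mem_nhdsGT_of_mem (by norm_num : (0:ℝ) ∈ Set.Ico 0 (1/2))]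
      with x hx
    rw [Real.norm_eq_abs, abs_mul, abs_mul]
    calc |Real.log x| * |g x| ≤ |Real.log x| * (C * x) :=
          mul_le_mul_of_nonneg_left (h x hx.1 hx.2) (abs_nonneg _)
      _ = C * (|Real.log x| * x) := by ring
      _ = C * (|Real.log x| * |x|) := by rw [abs_of_pos hx.1]
  · have h2 : Tendsto (fun x : ℝ => Real.log x * x) (nhdsWithin 0 (Set.Ioi 0)) (nhds 0) := by
      have := tendsto_log_mul_rpow_nhdsGT_zero (r := 1) one_pos
      apply this.congr'
      filter_upwards [self_mem_nhdsWithin] with x hx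
      rw [Real.rpow_one]
    have := (h2.abs).const_mul C
    simpa using this


section Coeffs
variable {a b : ℕ → ℝ}

lemma abound (ha0 : a 0 = 1)
    (ha : ∀ i : ℕ, a (i+1) = ((i * (i+1) + 3/16) * a i) / ((i+1) * (i+2))) :
    ∀ n, |a n| ≤ 1 := by
  intro n
  induction n with
  | zero => rw [ha0]; norm_num
  | succ m ih =>
    rw [ha m, abs_div, abs_mul]
    have h1 : |((m:ℝ) * (m+1) + 3/16)| = (m:ℝ) * (m+1) + 3/16 := abs_of_nonneg (by positivity)
    have h2 : |((m:ℝ)+1) * ((m:ℝ)+2)| = ((m:ℝ)+1) * ((m:ℝ)+2) := abs_of_nonneg (by positivity)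
    rw [h1, h2, div_le_one (by positivity)]
    have hc : (0:ℝ) ≤ (m:ℝ) * (m+1) + 3/16 := by positivity
    have := mul_le_mul_of_nonneg_left ih hc
    have hmn : (0:ℝ) ≤ (m:ℝ) := Nat.cast_nonneg m
    nlinarith

lemma bbound (ha0 : a 0 = 1)
    (ha : ∀ i : ℕ, a (i+1) = ((i * (i+1) + 3/16) * a i) / ((i+1) * (i+2)))
    (hb0 : b 0 = 16/3) (hb1 : b 1 = -1)
    (hb : ∀ i : ℕ, 1 ≤ i → b (i+1) =
      ((2*i - 1) * a (i-1) - (2*i + 1) * a i + ((i-1) * i + 3/16) * b i) / (i * (i+1))) :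
    ∀ n, |b n| ≤ 6 * (n+1) := by
  intro n
  induction n with
  | zero =>
    rw [hb0, abs_of_nonneg (by norm_num)]; norm_num
  | succ m ih =>
    cases m with
    | zero =>
      rw [hb1, abs_of_neg (by norm_num)]; norm_num
    | succ l =>
      have hrec := hb (l+1) (by omega)
      have hidx : (l+1) - 1 = l := rfl
      rw [hidx] at hrec
      rw [hrec, abs_div]
      have hal := abound ha0 ha l
      have hal1 := abound ha0 ha (l+1)
      have hbl1 := ih
      push_cast at hrec ⊢
      set i : ℝ := (l:ℝ) + 1 with hi
      have hi1 : 1 ≤ i := by rw [hi]; linarith [Nat.cast_nonneg (α := ℝ) l]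
      have hden : |i * (i+1)| = i * (i+1) := abs_of_nonneg (by nlinarith)
      rw [hden, div_le_iff₀ (by nlinarith)]
      have e1 : (0:ℝ) ≤ 2*i-1 := by linarith
      have e2 : (0:ℝ) ≤ 2*i+1 := by linarith
      have e3 : (0:ℝ) ≤ (i-1)*i + 3/16 := by nlinarith
      have htri : |(2*i - 1) * a l - (2*i + 1) * a (l+1) + ((i-1) * i + 3/16) * b (l+1)|
          ≤ (2*i-1) * |a l| + (2*i+1) * |a (l+1)| + ((i-1)*i + 3/16) * |b (l+1)| := by
        calc |(2*i - 1) * a l - (2*i + 1) * a (l+1) + ((i-1) * i + 3/16) * b (l+1)|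
            ≤ |(2*i - 1) * a l - (2*i + 1) * a (l+1)| + |((i-1) * i + 3/16) * b (l+1)| :=
              abs_add_le _ _
          _ ≤ (|(2*i - 1) * a l| + |(2*i + 1) * a (l+1)|) + |((i-1) * i + 3/16) * b (l+1)| := by
              have := abs_sub ((2*i - 1) * a l) ((2*i + 1) * a (l+1))
              linarith
          _ = (2*i-1) * |a l| + (2*i+1) * |a (l+1)| + ((i-1)*i + 3/16) * |b (l+1)| := by
              rw [abs_mul, abs_mul, abs_mul, abs_of_nonneg e1, abs_of_nonneg e2,
                abs_of_nonneg e3]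
      have hb1cast : |b (l+1)| ≤ 6 * (i + 1) := by
        have h := ih; push_cast at h; rw [hi]; exact h
      apply le_trans htri
      have m1 := mul_le_mul_of_nonneg_left hal e1
      have m2 := mul_le_mul_of_nonneg_left hal1 e2
      have m3 := mul_le_mul_of_nonneg_left hb1cast e3
      nlinarith [m1, m2, m3, hi1]

lemma Poly_a (ha0 : a 0 = 1)
    (ha : ∀ i : ℕ, a (i+1) = ((i * (i+1) + 3/16) * a i) / ((i+1) * (i+2))) : Poly a :=
  ⟨1, 0, fun n => by simpa using abound ha0 ha n⟩

lemma Poly_b (ha0 : a 0 = 1)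
    (ha : ∀ i : ℕ, a (i+1) = ((i * (i+1) + 3/16) * a i) / ((i+1) * (i+2)))
    (hb0 : b 0 = 16/3) (hb1 : b 1 = -1)
    (hb : ∀ i : ℕ, 1 ≤ i → b (i+1) =
      ((2*i - 1) * a (i-1) - (2*i + 1) * a i + ((i-1) * i + 3/16) * b i) / (i * (i+1))) :
    Poly b :=
  ⟨6, 1, fun n => by simpa using bbound ha0 ha hb0 hb1 hb n⟩


lemma ha' (ha : ∀ i : ℕ, a (i+1) = ((i * (i+1) + 3/16) * a i) / ((i+1) * (i+2))) :
    ∀ m : ℕ, ((m:ℝ)+1)*((m:ℝ)+2) * a (m+1) = ((m:ℝ)*((m:ℝ)+1) + 3/16) * a m := by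
  intro m
  rw [ha m]
  field_simp

lemma hb' (hb : ∀ i : ℕ, 1 ≤ i → b (i+1) =
      ((2*i - 1) * a (i-1) - (2*i + 1) * a i + ((i-1) * i + 3/16) * b i) / (i * (i+1))) :
    ∀ m : ℕ, ((m:ℝ)+1)*((m:ℝ)+2) * b (m+2) =
      (2*((m:ℝ)+1) - 1) * a m - (2*((m:ℝ)+1) + 1) * a (m+1) + (((m:ℝ))*((m:ℝ)+1) + 3/16) * b (m+1) := by
  intro m
  have h := hb (m+1) (by omega)
  have hidx : (m+1) - 1 = m := rfl
  rw [hidx] at h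
  push_cast at h
  rw [h]
  have hne : ((m:ℝ)+1) * ((m:ℝ)+1+1) ≠ 0 := by positivity
  field_simp
  ring

lemma coeff1 (ha0 : a 0 = 1)
    (ha : ∀ i : ℕ, a (i+1) = ((i * (i+1) + 3/16) * a i) / ((i+1) * (i+2))) :
    ∀ n : ℕ, 2*(Dc a n) + sh (Dc (Dc a)) n
      - (2*(sh (Dc a) n) + sh (sh (Dc (Dc a))) n) - 3/16*(a n) = 0 := by
  have h := ha' (a := a) ha
  intro n
  match n with
  | 0 =>
    simp only [Dc, sh]
    have h0 := h 0
    push_cast at h0 ⊢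
    linear_combination h0
  | 1 =>
    simp only [Dc, sh]
    have h1 := h 1
    push_cast at h1 ⊢
    linear_combination h1
  | (m+2) =>
    simp only [Dc, sh]
    have h2 := h (m+2)
    push_cast at h2 ⊢
    linear_combination h2

lemma coeff2 (ha0 : a 0 = 1)
    (ha : ∀ i : ℕ, a (i+1) = ((i * (i+1) + 3/16) * a i) / ((i+1) * (i+2)))
    (hb0 : b 0 = 16/3) (hb1 : b 1 = -1)
    (hb : ∀ i : ℕ, 1 ≤ i → b (i+1) =
      ((2*i - 1) * a (i-1) - (2*i + 1) * a i + ((i-1) * i + 3/16) * b i) / (i * (i+1))) :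
    ∀ n : ℕ, a n + 2*(sh (Dc a) n) + sh (Dc (Dc b)) n
      - (sh a n + 2*(sh (sh (Dc a)) n) + sh (sh (Dc (Dc b))) n) - 3/16*(b n) = 0 := by
  have hA := ha' (a := a) ha
  have hB := hb' (a := a) (b := b) hb
  intro n
  match n with
  | 0 =>
    simp only [Dc, sh]
    rw [ha0, hb0]
    norm_num
  | 1 =>
    simp only [Dc, sh]
    have h1 := hB 0
    push_cast at h1 ⊢
    linear_combination h1
  | (m+2) =>
    simp only [Dc, sh]
    have h2 := hB (m+1)
    push_cast at h2 ⊢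
    linear_combination h2

section Identities
variable {a b : ℕ → ℝ}

lemma hasSum_sh {c : ℕ → ℝ} (hc : Poly c) {x : ℝ} (hx : |x| < 1) :
    HasSum (fun n => sh c n * x^n) (x * S c x) := by
  have h := (hc.shp.summable hx).hasSum
  rwa [show (∑' n, sh c n * x^n) = S (sh c) x from rfl, S_sh (hc.summable hx)] at h

lemma ode_a (ha0 : a 0 = 1)
    (ha : ∀ i : ℕ, a (i+1) = ((i * (i+1) + 3/16) * a i) / ((i+1) * (i+2)))
    {x : ℝ} (hx : |x| < 1) :
    (1-x) * (2 * S (Dc a) x + x * S (Dc (Dc a)) x) = 3/16 * S a x := by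
  have Pa : Poly a := Poly_a ha0 ha
  have Pa1 := Pa.dc
  have Pa2 := Pa1.dc
  have hA : HasSum (fun n => a n * x^n) (S a x) := (Pa.summable hx).hasSum
  have hA1 : HasSum (fun n => Dc a n * x^n) (S (Dc a) x) := (Pa1.summable hx).hasSum
  have hshA2 := hasSum_sh Pa2 hx
  have hshA1 := hasSum_sh Pa1 hx
  have hsh2A2 : HasSum (fun n => sh (sh (Dc (Dc a))) n * x^n) (x * (x * S (Dc (Dc a)) x)) := by
    have h := hasSum_sh Pa2.shp hx
    rwa [S_sh (Pa2.summable hx)] at h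
  have H := (((hA1.mul_left 2).add hshA2).sub ((hshA1.mul_left 2).add hsh2A2)).sub
    (hA.mul_left (3/16))
  have H0 : HasSum (fun n => (2*(Dc a n * x^n) + sh (Dc (Dc a)) n * x^n)
      - (2*(sh (Dc a) n * x^n) + sh (sh (Dc (Dc a))) n * x^n) - 3/16*(a n * x^n)) 0 := by
    have heq : (fun n : ℕ => (2*(Dc a n * x^n) + sh (Dc (Dc a)) n * x^n)
        - (2*(sh (Dc a) n * x^n) + sh (sh (Dc (Dc a))) n * x^n) - 3/16*(a n * x^n))
        = fun _ => (0:ℝ) := by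
      funext n
      linear_combination (x^n) * coeff1 ha0 ha n
    rw [heq]
    exact hasSum_zero
  have hval := H.unique H0
  linear_combination hval

lemma ode_b (ha0 : a 0 = 1)
    (ha : ∀ i : ℕ, a (i+1) = ((i * (i+1) + 3/16) * a i) / ((i+1) * (i+2)))
    (hb0 : b 0 = 16/3) (hb1 : b 1 = -1)
    (hb : ∀ i : ℕ, 1 ≤ i → b (i+1) =
      ((2*i - 1) * a (i-1) - (2*i + 1) * a i + ((i-1) * i + 3/16) * b i) / (i * (i+1)))
    {x : ℝ} (hx : |x| < 1) :
    (1-x) * (S a x + 2 * (x * S (Dc a) x) + x * S (Dc (Dc b)) x) = 3/16 * S b x := by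
  have Pa : Poly a := Poly_a ha0 ha
  have Pb : Poly b := Poly_b ha0 ha hb0 hb1 hb
  have Pa1 := Pa.dc
  have Pb2 := Pb.dc.dc
  have hA : HasSum (fun n => a n * x^n) (S a x) := (Pa.summable hx).hasSum
  have hB : HasSum (fun n => b n * x^n) (S b x) := (Pb.summable hx).hasSum
  have hshA1 := hasSum_sh Pa1 hx
  have hshB2 := hasSum_sh Pb2 hx
  have hshA : HasSum (fun n => sh a n * x^n) (x * S a x) := hasSum_sh Pa hx
  have hsh2A1 : HasSum (fun n => sh (sh (Dc a)) n * x^n) (x * (x * S (Dc a) x)) := by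
    have h := hasSum_sh Pa1.shp hx
    rwa [S_sh (Pa1.summable hx)] at h
  have hsh2B2 : HasSum (fun n => sh (sh (Dc (Dc b))) n * x^n) (x * (x * S (Dc (Dc b)) x)) := by
    have h := hasSum_sh Pb2.shp hx
    rwa [S_sh (Pb2.summable hx)] at h
  have H := (((hA.add (hshA1.mul_left 2)).add hshB2).sub
    ((hshA.add (hsh2A1.mul_left 2)).add hsh2B2)).sub (hB.mul_left (3/16))
  have H0 : HasSum (fun n => ((a n * x^n + 2*(sh (Dc a) n * x^n)) + sh (Dc (Dc b)) n * x^n)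
      - ((sh a n * x^n + 2*(sh (sh (Dc a)) n * x^n)) + sh (sh (Dc (Dc b))) n * x^n)
      - 3/16*(b n * x^n)) 0 := by
    have heq : (fun n : ℕ => ((a n * x^n + 2*(sh (Dc a) n * x^n)) + sh (Dc (Dc b)) n * x^n)
        - ((sh a n * x^n + 2*(sh (sh (Dc a)) n * x^n)) + sh (sh (Dc (Dc b))) n * x^n)
        - 3/16*(b n * x^n)) = fun _ => (0:ℝ) := by
      funext n
      linear_combination (x^n) * coeff2 ha0 ha hb0 hb1 hb n
    rw [heq]
    exact hasSum_zero
  have hval := H.unique H0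
  linear_combination hval

end Identities
end Coeffs


set_option maxHeartbeats 1000000 in
lemma uniqueness {D D' D'' : ℝ → ℝ}
    (hD' : ∀ x ∈ Set.Ioo (0:ℝ) 1, HasDerivAt D (D' x) x)
    (hD'' : ∀ x ∈ Set.Ioo (0:ℝ) 1, HasDerivAt D' (D'' x) x)
    (hode : ∀ x ∈ Set.Ioo (0:ℝ) 1, x * (1-x) * D'' x = (3/16) * D x)
    (hD0 : Tendsto D (nhdsWithin 0 (Set.Ioi 0)) (nhds 0))
    (hD'0 : Tendsto D' (nhdsWithin 0 (Set.Ioi 0)) (nhds 0)) :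
    ∀ x ∈ Set.Ioo (0:ℝ) 1, D x = 0 := by
  -- continuity facts
  have hDc : ContinuousOn D (Set.Ioo 0 1) :=
    fun x hx => (hD' x hx).continuousAt.continuousWithinAt
  have hD'c : ContinuousOn D' (Set.Ioo 0 1) :=
    fun x hx => (hD'' x hx).continuousAt.continuousWithinAt
  -- Part 1 : the sup N of |D'| on (0,1/2]
  set T : Set ℝ := (fun t => |D' t|) '' (Set.Ioc 0 (1/2:ℝ)) with hT
  have hTne : T.Nonempty := ⟨|D' (1/2)|, ⟨1/2, by norm_num, rfl⟩⟩
  have hTbdd : BddAbove T := by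
    -- near 0 bounded by 1
    have hev : {x : ℝ | dist (D' x) 0 < 1} ∈ nhdsWithin 0 (Set.Ioi 0) :=
      hD'0 (Metric.ball_mem_nhds 0 one_pos)
    rw [Metric.mem_nhdsWithin_iff] at hev
    obtain ⟨ε, hε, hball⟩ := hev
    -- on [ε', 1/2] (with ε' := min ε (1/2) > 0) bounded by compactness
    set ε' : ℝ := min (ε/2) (1/2) with hε'
    have hε'0 : 0 < ε' := by positivity
    have hε'le : ε' ≤ 1/2 := min_le_right _ _
    have hsub : Set.Icc ε' (1/2:ℝ) ⊆ Set.Ioo 0 1 := fun y hy =>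
      ⟨lt_of_lt_of_le hε'0 hy.1, by nlinarith [hy.2]⟩
    obtain ⟨M, hM⟩ := (isCompact_Icc (a := ε') (b := (1/2:ℝ))).exists_bound_of_continuousOn
      (hD'c.mono hsub)
    refine ⟨max 1 M, fun y hy => ?_⟩
    obtain ⟨t, ht, rfl⟩ := hy
    by_cases hc : ε' ≤ t
    · have := hM t ⟨hc, ht.2⟩
      rw [Real.norm_eq_abs] at this
      exact le_trans this (le_max_right _ _)
    · push_neg at hc
      have : t ∈ Metric.ball (0:ℝ) ε ∩ Set.Ioi 0 := by
        constructor
        · rw [Metric.mem_ball, Real.dist_eq, sub_zero, abs_of_pos ht.1]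
          calc t < ε' := hc
            _ ≤ ε/2 := min_le_left _ _
            _ < ε := by linarith
        · exact ht.1
      have := hball this
      rw [Set.mem_setOf_eq, Real.dist_eq, sub_zero] at this
      exact le_trans this.le (le_max_left _ _)
  set N : ℝ := sSup T with hN
  have hmemN : ∀ t ∈ Set.Ioc (0:ℝ) (1/2), |D' t| ≤ N :=
    fun t ht => le_csSup hTbdd ⟨t, ht, rfl⟩
  have hN0 : 0 ≤ N := le_trans (abs_nonneg _) (hmemN (1/2) (by norm_num))
  -- (ii) |D t| ≤ N * t on (0,1/2]
  have hDle : ∀ t ∈ Set.Ioc (0:ℝ) (1/2), |D t| ≤ N * t := by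
    intro t ht
    have hstep : ∀ s ∈ Set.Ioo (0:ℝ) t, |D t - D s| ≤ N * (t - s) := by
      intro s hs
      have hIcc : Set.Icc s t ⊆ Set.Ioo 0 1 := fun u hu =>
        ⟨lt_of_lt_of_le hs.1 hu.1, lt_of_le_of_lt hu.2 (lt_of_le_of_lt ht.2 (by norm_num))⟩
      have := Convex.norm_image_sub_le_of_norm_hasDerivWithin_le
        (f := D) (f' := D') (s := Set.Icc s t) (C := N)
        (fun u hu => (hD' u (hIcc hu)).hasDerivWithinAt)
        (fun u hu => by
          rw [Real.norm_eq_abs]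
          exact hmemN u ⟨lt_of_lt_of_le hs.1 hu.1, le_trans hu.2 ht.2⟩)
        (convex_Icc s t) (Set.left_mem_Icc.2 (le_of_lt hs.2)) (Set.right_mem_Icc.2 (le_of_lt hs.2))
      rw [Real.norm_eq_abs, Real.norm_eq_abs, abs_of_nonneg (by linarith [hs.2] : (0:ℝ) ≤ t - s)]
        at this
      exact this
    -- limit s → 0
    have hev : ∀ᶠ s in nhdsWithin 0 (Set.Ioi 0), |D t| - N * t ≤ |D s| := by
      filter_upwards [Ioo_mem_nhdsGT_of_mem (by exact ⟨le_refl _, ht.1⟩ : (0:ℝ) ∈ Set.Ico 0 t)]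
        with s hs
      have h1 := hstep s hs
      have h2 : |D t| ≤ |D t - D s| + |D s| := by
        have := abs_sub_abs_le_abs_sub (D t) (D s)
        have h3 := abs_add_le (D t - D s) (D s)
        simp only [sub_add_cancel] at h3
        linarith
      have h4 : N * (t - s) ≤ N * t := by nlinarith [hs.1]
      linarith
    have := ge_of_tendsto (hD0.abs) hev
    simp only [abs_zero] at this
    linarith
  -- (iii) |D' t| ≤ (3/8) * N * t on (0,1/2]
  have hD'le : ∀ t ∈ Set.Ioc (0:ℝ) (1/2), |D' t| ≤ (3/8) * N * t := by
    intro t ht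
    have hstep : ∀ s ∈ Set.Ioo (0:ℝ) t, |D' t - D' s| ≤ (3/8) * N * (t - s) := by
      intro s hs
      have hst : s ≤ t := hs.2.le
      have hIcc : Set.Icc s t ⊆ Set.Ioo 0 1 := fun u hu =>
        ⟨lt_of_lt_of_le hs.1 hu.1, lt_of_le_of_lt hu.2 (lt_of_le_of_lt ht.2 (by norm_num))⟩
      -- FTC
      have hftc : ∫ u in s..t, D'' u = D' t - D' s := by
        apply intervalIntegral.integral_eq_sub_of_hasDerivAt
        · intro u hu
          rw [Set.uIcc_of_le hst] at hu
          exact hD'' u (hIcc hu)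
        · -- interval integrability
          apply ContinuousOn.intervalIntegrable
          rw [Set.uIcc_of_le hst]
          apply ContinuousOn.congr (f := fun u => (3/16) * D u / (u * (1-u)))
          · apply ContinuousOn.div
            · exact continuousOn_const.mul (hDc.mono hIcc)
            · exact (continuousOn_id.mul (continuousOn_const.sub continuousOn_id))
            · intro u hu
              have := hIcc hu
              nlinarith [this.1, this.2]
          · intro u hu
            have hu' := hIcc hu
            have := hode u hu'
            have hne : u * (1-u) ≠ 0 := by nlinarith [hu'.1, hu'.2]
            first | rw [eq_div_iff hne] | rw [div_eq_iff hne]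
            linarith [this]
      have hbound : ∀ u ∈ Set.uIoc s t, ‖D'' u‖ ≤ (3/8) * N := by
        intro u hu
        rw [Set.uIoc_of_le hst] at hu
        have hu1 : u ∈ Set.Ioc (0:ℝ) (1/2) := ⟨lt_trans hs.1 hu.1, le_trans hu.2 ht.2⟩
        have hu' : u ∈ Set.Ioo (0:ℝ) 1 := ⟨hu1.1, lt_of_le_of_lt hu1.2 (by norm_num)⟩
        have heq := hode u hu'
        have hDu := hDle u hu1
        have h12 : u * (1-u) ≥ u / 2 := by nlinarith [hu1.1, hu1.2]
        have habs : u * (1-u) * |D'' u| = (3/16) * |D u| := by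
          have h5 : |u * (1-u) * D'' u| = |(3/16) * D u| := by rw [heq]
          rw [abs_mul, abs_mul, abs_mul,
            abs_of_nonneg (le_of_lt hu'.1),
            abs_of_nonneg (by nlinarith [hu'.2] : (0:ℝ) ≤ 1-u),
            abs_of_nonneg (by norm_num : (0:ℝ) ≤ (3:ℝ)/16)] at h5
          exact h5
        rw [Real.norm_eq_abs]
        nlinarith [abs_nonneg (D'' u), hu1.1, habs, hDu]
      have hint := intervalIntegral.norm_integral_le_of_norm_le_const hbound
      rw [hftc, Real.norm_eq_abs] at hint
      rw [abs_of_nonneg (by linarith : (0:ℝ) ≤ t - s)] at hint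
      exact hint
    have hev : ∀ᶠ s in nhdsWithin 0 (Set.Ioi 0), |D' t| - (3/8) * N * t ≤ |D' s| := by
      filter_upwards [Ioo_mem_nhdsGT_of_mem (by exact ⟨le_refl _, ht.1⟩ : (0:ℝ) ∈ Set.Ico 0 t)]
        with s hs
      have h1 := hstep s hs
      have h2 : |D' t| ≤ |D' t - D' s| + |D' s| := by
        have h3 := abs_add_le (D' t - D' s) (D' s)
        simp only [sub_add_cancel] at h3
        linarith
      have h4 : (3/8) * N * (t - s) ≤ (3/8) * N * t := by nlinarith [hs.1]
      linarith
    have := ge_of_tendsto (hD'0.abs) hev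
    simp only [abs_zero] at this
    linarith
  -- (iv) N = 0
  have hNzero : N = 0 := by
    have hle : N ≤ (3/16) * N := by
      apply csSup_le hTne
      intro y hy
      obtain ⟨t, ht, rfl⟩ := hy
      calc |D' t| ≤ (3/8) * N * t := hD'le t ht
        _ ≤ (3/8) * N * (1/2) := by nlinarith [ht.2, hN0]
        _ = (3/16) * N := by ring
    linarith
  have hDzero : ∀ t ∈ Set.Ioc (0:ℝ) (1/2), D t = 0 := by
    intro t ht
    have := hDle t ht
    rw [hNzero] at this
    simp only [zero_mul] at this
    exact abs_eq_zero.1 (le_antisymm this (abs_nonneg _))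
  have hD'zero : ∀ t ∈ Set.Ioc (0:ℝ) (1/2), D' t = 0 := by
    intro t ht
    have := hD'le t ht
    rw [hNzero] at this
    simp only [mul_zero, zero_mul] at this
    exact abs_eq_zero.1 (le_antisymm this (abs_nonneg _))
  -- Part 2 : propagate to [1/2, 1)
  intro z hz
  by_cases hz2 : z ≤ 1/2
  · exact hDzero z ⟨hz.1, hz2⟩
  push_neg at hz2
  set c0 : ℝ := 3/(8*(1-z)) with hc0
  have hc00 : 0 < c0 := by
    have h1z : (0:ℝ) < 1 - z := by linarith [hz.2]
    positivity
  set K : ℝ := 1 + c0 with hK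
  have hK0 : 0 < K := by linarith
  set φ : ℝ → ℝ := fun t => ((D t)^2 + (D' t)^2) * Real.exp (-K*t) with hφ
  have hIccsub : Set.Icc (1/2:ℝ) z ⊆ Set.Ioo 0 1 := fun u hu =>
    ⟨lt_of_lt_of_le (by norm_num) hu.1, lt_of_le_of_lt hu.2 hz.2⟩
  have hφderiv : ∀ t ∈ Set.Icc (1/2:ℝ) z, HasDerivAt φ
      ((2 * D t * D' t + 2 * D' t * D'' t - K * ((D t)^2 + (D' t)^2)) * Real.exp (-K*t)) t := by
    intro t ht
    have ht' := hIccsub ht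
    have h1 : HasDerivAt (fun t => (D t)^2 + (D' t)^2)
        (2 * D t * D' t + 2 * D' t * D'' t) t := by
      have ha1 : HasDerivAt (fun t => (D t)^2) (2 * D t * D' t) t := by
        have := ((hD' t ht').fun_pow 2)
        simpa [mul_comm, mul_assoc] using this
      have ha2 : HasDerivAt (fun t => (D' t)^2) (2 * D' t * D'' t) t := by
        have := ((hD'' t ht').fun_pow 2)
        simpa [mul_comm, mul_assoc] using this
      exact ha1.add ha2
    have h2 : HasDerivAt (fun t : ℝ => Real.exp (-K*t)) (-K * Real.exp (-K*t)) t := by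
      have h := ((hasDerivAt_id t).const_mul (-K)).exp
      simp only [id_eq, mul_one] at h
      convert h using 1
      ring
    have := h1.fun_mul h2
    convert this using 1 <;> first | rfl | ring
  have hφanti : AntitoneOn φ (Set.Icc (1/2:ℝ) z) := by
    apply antitoneOn_of_deriv_nonpos (convex_Icc _ _)
    · intro t ht
      exact (hφderiv t ht).continuousAt.continuousWithinAt
    · intro t ht
      rw [interior_Icc] at ht
      exact (hφderiv t (Set.mem_Icc_of_Ioo ht)).differentiableAt.differentiableWithinAt
    · intro t ht
      rw [interior_Icc] at ht
      have htIcc := Set.mem_Icc_of_Ioo ht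
      rw [(hφderiv t htIcc).deriv]
      have ht' := hIccsub htIcc
      -- show the bracket is nonpositive
      have hD''bound : |D'' t| ≤ c0 * |D t| := by
        have heq := hode t ht'
        have hprod : t * (1-t) ≥ (1-z)/2 := by
          have h1 : (1/2:ℝ) ≤ t := htIcc.1
          have h2 : t ≤ z := htIcc.2
          nlinarith [hz.2]
        have habs : t * (1-t) * |D'' t| = (3/16) * |D t| := by
          have h5 : |t * (1-t) * D'' t| = |(3/16) * D t| := by rw [heq]
          rw [abs_mul, abs_mul, abs_mul,
            abs_of_nonneg (le_of_lt ht'.1),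
            abs_of_nonneg (by nlinarith [ht'.2] : (0:ℝ) ≤ 1-t),
            abs_of_nonneg (by norm_num : (0:ℝ) ≤ (3:ℝ)/16)] at h5
          exact h5
        have h6 : (1-z)/2 * |D'' t| ≤ (3/16) * |D t| := by
          nlinarith [abs_nonneg (D'' t), hprod]
        rw [hc0]
        rw [div_mul_eq_mul_div, le_div_iff₀ (by linarith [hz.2] : (0:ℝ) < 8*(1-z))]
        nlinarith [h6, hz.2]
      have hb1 : 2 * D t * D' t ≤ (D t)^2 + (D' t)^2 := by nlinarith [sq_nonneg (D t - D' t)]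
      have hb2 : 2 * D' t * D'' t ≤ c0 * ((D t)^2 + (D' t)^2) := by
        have h7 : 2 * D' t * D'' t ≤ 2 * |D' t| * |D'' t| := by
          calc 2 * D' t * D'' t ≤ |2 * D' t * D'' t| := le_abs_self _
            _ = 2 * |D' t| * |D'' t| := by rw [abs_mul, abs_mul]; simp [abs_of_nonneg]
        have h8 : 2 * |D' t| * |D'' t| ≤ 2 * |D' t| * (c0 * |D t|) :=
          mul_le_mul_of_nonneg_left hD''bound (by positivity)
        have h9 : 2 * |D' t| * (c0 * |D t|) ≤ c0 * ((D t)^2 + (D' t)^2) := by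
          nlinarith [sq_nonneg (|D t| - |D' t|), sq_abs (D t), sq_abs (D' t), hc00]
        linarith
      apply mul_nonpos_of_nonpos_of_nonneg
      · rw [hK]; nlinarith [hb1, hb2]
      · positivity
  have hφz := hφanti (Set.left_mem_Icc.2 (by linarith [hz.2, hz2])) 
    (Set.right_mem_Icc.2 (by linarith [hz2])) (by linarith [hz2])
  have hφhalf : φ (1/2) = 0 := by
    rw [hφ]
    simp only
    rw [hDzero (1/2) (by norm_num), hD'zero (1/2) (by norm_num)]
    ring
  rw [hφhalf] at hφz
  have hφznn : 0 ≤ φ z := by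
    rw [hφ]
    positivity
  have : φ z = 0 := le_antisymm hφz hφznn
  rw [hφ] at this
  simp only at this
  have hexp : Real.exp (-K*z) > 0 := Real.exp_pos _
  have h0 : D z ^ 2 + D' z ^ 2 = 0 := by
    rcases mul_eq_zero.mp this with h|h
    · exact h
    · exact absurd h (ne_of_gt hexp)
  have h1 : D z ^ 2 = 0 := by nlinarith [sq_nonneg (D z), sq_nonneg (D' z)]
  exact pow_eq_zero_iff (by norm_num) |>.mp h1



end VExp

open VExp in
set_option maxHeartbeats 2000000 in
theorem v_expansion (v v' v'' : ℝ → ℝ) (a b : ℕ → ℝ)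
    (hv' : ∀ x ∈ Set.Ioo (0:ℝ) 1, HasDerivAt v (v' x) x)
    (hv'' : ∀ x ∈ Set.Ioo (0:ℝ) 1, HasDerivAt v' (v'' x) x)
    (hode : ∀ x ∈ Set.Ioo (0:ℝ) 1, x * (1-x) * v'' x = (3/16) * v x)
    (hv0 : Tendsto v (nhdsWithin 0 (Set.Ioi 0)) (nhds 1))
    (hv'0 : Tendsto (fun x => v' x - (3/16) * Real.log x)
      (nhdsWithin 0 (Set.Ioi 0)) (nhds (-(9/8) * Real.log 2)))
    (ha0 : a 0 = 1)
    (ha : ∀ i : ℕ, a (i+1) = ((i * (i+1) + 3/16) * a i) / ((i+1) * (i+2)))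
    (hb0 : b 0 = 16/3) (hb1 : b 1 = -1)
    (hb : ∀ i : ℕ, 1 ≤ i → b (i+1) =
      ((2*i - 1) * a (i-1) - (2*i + 1) * a i + ((i-1) * i + 3/16) * b i) / (i * (i+1))) :
    ∀ x ∈ Set.Ioo (0:ℝ) 1,
      v x = (-(9/8) * Real.log 2) * (∑' i : ℕ, a i * x ^ (i+1)) +
        1 * ((3/16) * (∑' i : ℕ, b i * x ^ i) +
          (3/16) * Real.log x * (∑' i : ℕ, a i * x ^ (i+1))) := by
  have Pa : Poly a := Poly_a ha0 ha
  have Pb : Poly b := Poly_b ha0 ha hb0 hb1 hb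
  set A₀ : ℝ := -(9/8) * Real.log 2 with hA₀
  set w : ℝ → ℝ := fun y => A₀ * (y * S a y) + (3/16) * (S b y) +
    (3/16) * (Real.log y * (y * S a y)) with hw
  set w1 : ℝ → ℝ := fun y => A₀ * (S a y + y * S (Dc a) y) + (3/16) * (S (Dc b) y) +
    (3/16) * (S a y + Real.log y * (S a y + y * S (Dc a) y)) with hw1
  set w2 : ℝ → ℝ := fun y => A₀ * (2 * S (Dc a) y + y * S (Dc (Dc a)) y) +
    (3/16) * (S (Dc (Dc b)) y) +
    (3/16) * (S (Dc a) y + y⁻¹ * (S a y + y * S (Dc a) y) +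
      Real.log y * (2 * S (Dc a) y + y * S (Dc (Dc a)) y)) with hw2
  -- derivatives of w
  have habs1 : ∀ y : ℝ, y ∈ Set.Ioo (0:ℝ) 1 → |y| < 1 := by
    intro y hy
    rw [abs_of_pos hy.1]
    exact hy.2
  have hxSa : ∀ y ∈ Set.Ioo (0:ℝ) 1, HasDerivAt (fun y => y * S a y)
      (S a y + y * S (Dc a) y) y := by
    intro y hy
    have h := (hasDerivAt_id' y).fun_mul (hasDerivAt_S Pa (habs1 y hy))
    simpa using h
  have hw' : ∀ y ∈ Set.Ioo (0:ℝ) 1, HasDerivAt w (w1 y) y := by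
    intro y hy
    have hy0 : y ≠ 0 := ne_of_gt hy.1
    have hSb := hasDerivAt_S Pb (habs1 y hy)
    have hlog := Real.hasDerivAt_log hy0
    have hlm := hlog.fun_mul (hxSa y hy)
    have h := (((hxSa y hy).const_mul A₀).fun_add (hSb.const_mul (3/16))).fun_add
      ((hlm).const_mul (3/16))
    rw [hw, hw1]
    convert h using 1 <;> first | rfl | (field_simp; try ring)
  have hw'' : ∀ y ∈ Set.Ioo (0:ℝ) 1, HasDerivAt w1 (w2 y) y := by
    intro y hy
    have hy0 : y ≠ 0 := ne_of_gt hy.1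
    have hSa1 := hasDerivAt_S Pa.dc (habs1 y hy)
    have hSb2 := hasDerivAt_S Pb.dc (habs1 y hy)
    have hdA : HasDerivAt (fun y => S a y + y * S (Dc a) y)
        (S (Dc a) y + (S (Dc a) y + y * S (Dc (Dc a)) y)) y := by
      have h := (hasDerivAt_S Pa (habs1 y hy)).fun_add
        ((hasDerivAt_id' y).fun_mul (hasDerivAt_S Pa.dc (habs1 y hy)))
      simpa using h
    have hlog := Real.hasDerivAt_log hy0
    have hlm := hlog.fun_mul hdA
    have h := ((hdA.const_mul A₀).fun_add (hSb2.const_mul (3/16))).fun_add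
      (((hasDerivAt_S Pa (habs1 y hy)).fun_add hlm).const_mul (3/16))
    rw [hw1, hw2]
    convert h using 1 <;> first | rfl | ring
  -- ODE for w
  have hodew : ∀ y ∈ Set.Ioo (0:ℝ) 1, y * (1-y) * w2 y = (3/16) * w y := by
    intro y hy
    have hy0 : y ≠ 0 := ne_of_gt hy.1
    have e1 := ode_a ha0 ha (habs1 y hy)
    have e2 := ode_b ha0 ha hb0 hb1 hb (habs1 y hy)
    have hyy : y * y⁻¹ = 1 := mul_inv_cancel₀ hy0
    rw [hw, hw2]
    simp only
    linear_combination (A₀ * y + (3/16) * Real.log y * y) * e1 + (3/16) * e2 +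
      ((3/16) * (1-y) * (S a y + y * S (Dc a) y)) * hyy
  -- boundary limits for w
  have tid : Tendsto (fun y : ℝ => y) (nhdsWithin 0 (Set.Ioi 0)) (nhds 0) :=
    Filter.tendsto_id.mono_left nhdsWithin_le_nhds
  have tSa : Tendsto (S a) (nhdsWithin 0 (Set.Ioi 0)) (nhds 1) := by
    have := Pa.tendsto_S
    rwa [ha0] at this
  have tSb : Tendsto (S b) (nhdsWithin 0 (Set.Ioi 0)) (nhds (16/3)) := by
    have := Pb.tendsto_S
    rwa [hb0] at this
  have tSa1 : Tendsto (S (Dc a)) (nhdsWithin 0 (Set.Ioi 0)) (nhds (Dc a 0)) := Pa.dc.tendsto_S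
  have tSb1 : Tendsto (S (Dc b)) (nhdsWithin 0 (Set.Ioi 0)) (nhds (-1)) := by
    have := Pb.dc.tendsto_S
    have h0 : Dc b 0 = -1 := by simp [Dc, hb1]
    rwa [h0] at this
  have txSa : Tendsto (fun y => y * S a y) (nhdsWithin 0 (Set.Ioi 0)) (nhds 0) := by
    have := tid.mul tSa
    simpa using this
  have txSa1 : Tendsto (fun y => y * S (Dc a) y) (nhdsWithin 0 (Set.Ioi 0)) (nhds 0) := by
    have := tid.mul tSa1
    simpa using this
  obtain ⟨Ca, hCa0, hCa⟩ := Pa.tail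
  obtain ⟨Ca1, hCa10, hCa1⟩ := Pa.dc.tail
  -- log y * (y * S a y) → 0
  have tlog1 : Tendsto (fun y => Real.log y * (y * S a y))
      (nhdsWithin 0 (Set.Ioi 0)) (nhds 0) := by
    apply tendsto_log_mul_small (C := 1 + Ca * (1/2))
    intro y hy0 hy2
    have h1 := hCa y hy0 hy2
    rw [ha0] at h1
    have h2 : |S a y| ≤ 1 + Ca * y := by
      have := abs_sub_abs_le_abs_sub (S a y) 1
      simp only [abs_one] at this
      linarith
    rw [abs_mul, abs_of_pos hy0]
    calc y * |S a y| ≤ y * (1 + Ca * y) := mul_le_mul_of_nonneg_left h2 hy0.le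
      _ ≤ (1 + Ca * (1/2)) * y := by
          nlinarith [mul_le_mul_of_nonneg_left hy2 (mul_nonneg hCa0 hy0.le)]
  have tw : Tendsto w (nhdsWithin 0 (Set.Ioi 0)) (nhds 1) := by
    rw [hw]
    have h := ((txSa.const_mul A₀).add (tSb.const_mul (3/16))).add (tlog1.const_mul (3/16))
    have hval : A₀ * 0 + (3/16) * (16/3) + (3/16) * 0 = 1 := by norm_num
    rwa [hval] at h
  -- limit of w1 - (3/16) log
  have tdA : Tendsto (fun y => S a y + y * S (Dc a) y) (nhdsWithin 0 (Set.Ioi 0)) (nhds 1) := by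
    have := tSa.add txSa1
    simpa using this
  have tlog2 : Tendsto (fun y => Real.log y * (S a y + y * S (Dc a) y - 1))
      (nhdsWithin 0 (Set.Ioi 0)) (nhds 0) := by
    apply tendsto_log_mul_small (C := Ca + (|Dc a 0| + Ca1 * (1/2)))
    intro y hy0 hy2
    have h1 := hCa y hy0 hy2
    rw [ha0] at h1
    have h3 := hCa1 y hy0 hy2
    have h4 : |S (Dc a) y| ≤ |Dc a 0| + Ca1 * y := by
      have := abs_sub_abs_le_abs_sub (S (Dc a) y) (Dc a 0)
      linarith
    have h5 : |S a y + y * S (Dc a) y - 1| ≤ |S a y - 1| + y * |S (Dc a) y| := by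
      have h6 := abs_add_le (S a y - 1) (y * S (Dc a) y)
      rw [abs_mul, abs_of_pos hy0] at h6
      calc |S a y + y * S (Dc a) y - 1| = |(S a y - 1) + y * S (Dc a) y| := by ring_nf
        _ ≤ |S a y - 1| + y * |S (Dc a) y| := h6
    calc |S a y + y * S (Dc a) y - 1| ≤ |S a y - 1| + y * |S (Dc a) y| := h5
      _ ≤ Ca * y + y * (|Dc a 0| + Ca1 * y) := by
          have := mul_le_mul_of_nonneg_left h4 hy0.le
          linarith
      _ ≤ (Ca + (|Dc a 0| + Ca1 * (1/2))) * y := by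
          nlinarith [abs_nonneg (Dc a 0), mul_le_mul_of_nonneg_left hy2 (mul_nonneg hCa10 hy0.le)]
  have tw1 : Tendsto (fun y => w1 y - (3/16) * Real.log y)
      (nhdsWithin 0 (Set.Ioi 0)) (nhds A₀) := by
    have h := ((tdA.const_mul A₀).add (tSb1.const_mul (3/16))).add
      ((tSa.const_mul (3/16)).add (tlog2.const_mul (3/16)))
    have hval : A₀ * 1 + (3/16) * (-1) + ((3/16) * 1 + (3/16) * 0) = A₀ := by ring
    rw [hval] at h
    apply h.congr
    intro y
    rw [hw1]
    ring
  -- uniqueness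
  have hD := uniqueness (D := fun y => v y - w y) (D' := fun y => v' y - w1 y)
    (D'' := fun y => v'' y - w2 y)
    (fun y hy => (hv' y hy).sub (hw' y hy))
    (fun y hy => (hv'' y hy).sub (hw'' y hy))
    (fun y hy => by
      have h1 := hode y hy
      have h2 := hodew y hy
      ring_nf
      ring_nf at h1 h2
      linarith)
    (by
      have := hv0.sub tw
      simpa using this)
    (by
      have h := hv'0.sub tw1
      rw [show (-(9/8) * Real.log 2) - A₀ = 0 by rw [hA₀]; ring] at h
      apply h.congr
      intro y
      ring)
  intro x hx
  have hvw := hD x hx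
  have hveq : v x = w x := by
    have h := hvw
    simp only [sub_eq_zero] at h
    exact h
  have hsx : (∑' i : ℕ, a i * x ^ (i+1)) = x * S a x := by
    rw [S, ← tsum_mul_left]
    exact tsum_congr fun n => by ring
  have hsb : (∑' i : ℕ, b i * x ^ i) = S b x := rfl
  rw [hveq, hw, hsx, hsb]
  simp only
  rw [hA₀]
  ring
end
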